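/- arXiv:2605.18123 — 9 statements merged into one kernel-verified Lean document; each statement's English description precedes it below -/
import Mathlib

section
/- Fix integers k ≥ 2 and p' ≥ k' ≥ 2, and reals α ∈ (0,1) and γ ∈ (0,1]. Then for every N ∈ ℕ there exist n ≥ N, a set X, and subsets S_1, …, S_n of X such that: (1) the number of k-element subsets I of {1,…,n} with ⋂_{i∈I} S_i ≠ ∅ is strictly greater than α·binom(n,k); and (2) for every J ⊆ {1,…,n} with |J| ≥ γ·n, the family {S_i : i ∈ J} fails the (p',k')-property, i.e., there exist distinct indices i_1, …, i_{p'} ∈ J such that for every k'-element subset L of {1,…,p'} we have ⋂_{ℓ∈L} S_{i_ℓ} = ∅. -/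
/-- `consCount S k` is the number of `k`-element index subsets `J` of `{1,…,n}` such that
`⋂ i ∈ J, S i` is non-empty (the cardinality of `Cons_k(S̄)`). -/
noncomputable def consCount {X : Type*} {n : ℕ} (S : Fin n → Set X) (k : ℕ) : ℕ :=
  {J : Finset (Fin n) | J.card = k ∧ (⋂ i ∈ J, S i).Nonempty}.ncard

/-- Fix integers `k ≥ 2` and `p' ≥ k' ≥ 2`, and reals `α ∈ (0,1)`, `γ ∈ (0,1]`. Then for
every `N` there exist `n ≥ N`, a set `X` and subsets `S_1, …, S_n` of `X` such that:
(1) more than an `α`-fraction of the `k`-element subfamilies intersect, i.e. the number of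
`k`-element subsets `I` of `{1,…,n}` with `⋂_{i∈I} S_i ≠ ∅` is `> α·binom(n,k)`; and
(2) for every `J ⊆ {1,…,n}` with `|J| ≥ γ·n` the induced subfamily fails the
`(p',k')`-property: there are distinct indices `i_1, …, i_{p'} ∈ J` such that every
`k'`-element subset `L` of `{1,…,p'}` has `⋂_{ℓ∈L} S_{i_ℓ} = ∅`. -/
theorem robust_counterexample (k p' k' : ℕ) (hk : 2 ≤ k) (hk' : 2 ≤ k') (hp'k' : k' ≤ p')
    (α γ : ℝ) (hα0 : 0 < α) (hα1 : α < 1) (hγ0 : 0 < γ) (hγ1 : γ ≤ 1) :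
    ∀ N : ℕ, ∃ n : ℕ, N ≤ n ∧ ∃ (X : Type) (S : Fin n → Set X),
      (α * (n.choose k : ℝ) < (consCount S k : ℝ)) ∧
      ∀ J : Finset (Fin n), γ * (n : ℝ) ≤ (J.card : ℝ) →
        ∃ g : Fin p' → Fin n, Function.Injective g ∧ (∀ ℓ, g ℓ ∈ J) ∧
          ∀ L : Finset (Fin p'), L.card = k' → ⋂ ℓ ∈ L, S (g ℓ) = ∅ := by
  intro N
  classical
  obtain ⟨k2, rfl⟩ : ∃ k2, k = k2 + 2 := ⟨k - 2, by omega⟩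
  set s : ℕ := ⌈(p' : ℝ) / γ⌉₊ with hs_def
  have hs_pos : 0 < s := by
    rw [hs_def]
    apply Nat.ceil_pos.2
    apply div_pos _ hγ0
    have : 0 < p' := by omega
    exact_mod_cast this
  have hγs : (p' : ℝ) ≤ γ * s := by
    have h1 : ((p' : ℝ) / γ) ≤ (s : ℝ) := Nat.le_ceil _
    calc (p' : ℝ) = γ * ((p' : ℝ) / γ) := by field_simp
    _ ≤ γ * s := by exact mul_le_mul_of_nonneg_left h1 (le_of_lt hγ0)
  have h1α : (0:ℝ) < 1 - α := by linarith
  obtain ⟨B, hB⟩ := exists_nat_gt ((4*s*(k2+2)*(k2+2) : ℝ)/(1-α) + 2*(k2+2) + 2)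
  set m : ℕ := B + N + 1 with hm_def
  set n : ℕ := s * m with hn_def
  have hposfrac : (0:ℝ) ≤ (4*s*(k2+2)*(k2+2) : ℝ)/(1-α) := by positivity
  have hBn : (B : ℝ) ≤ (n : ℝ) := by
    have : B ≤ n := by
      calc B ≤ m := by omega
      _ = 1 * m := (one_mul m).symm
      _ ≤ s * m := Nat.mul_le_mul_right m hs_pos
    exact_mod_cast this
  have hnk : k2 + 2 + 2 ≤ n := by
    have h2 : (2*(k2+2) + 2 : ℝ) < B := by linarith
    have : 2*(k2+2) + 2 ≤ B := by exact_mod_cast h2.le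
    have hBn' : B ≤ n := by exact_mod_cast hBn
    omega
  -- the set system
  set Adm : Finset (Fin n) → Prop :=
    fun A => ∀ t : ℕ, (A.filter (fun j => (j : Fin n).val / s = t)).card < k' with hAdm_def
  set S : Fin n → Set (Finset (Fin n)) := fun i => {A | i ∈ A ∧ Adm A} with hS_def
  refine ⟨n, ?_, Finset (Fin n), S, ?_, ?_⟩
  · calc N ≤ m := by omega
    _ = 1 * m := (one_mul m).symm
    _ ≤ s * m := Nat.mul_le_mul_right m hs_pos
  · -- counting condition
    set PK : Finset (Finset (Fin n)) := Finset.powersetCard (k2+2) Finset.univ with hPK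
    set Good : Finset (Finset (Fin n)) := PK.filter Adm with hGood
    set Bad : Finset (Finset (Fin n)) := PK.filter (fun J => ¬ Adm J) with hBad
    have hPKcard : PK.card = n.choose (k2+2) := by
      rw [hPK, Finset.card_powersetCard, Finset.card_univ, Fintype.card_fin]
    have hsplit : Good.card + Bad.card = n.choose (k2+2) := by
      rw [hGood, hBad, Finset.card_filter_add_card_filter_not, hPKcard]
    -- Bad is small
    set pairs : Finset (Fin n × Fin n) :=
      (Finset.univ ×ˢ Finset.univ).filter
        (fun pr => pr.1 ≠ pr.2 ∧ pr.1.val / s = pr.2.val / s) with hpairs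
    have hpairs_card : pairs.card ≤ n * s := by
      have : pairs.card ≤ Fintype.card (Fin n × Fin s) := by
        apply Finset.card_le_card_of_injOn
          (fun pr => (pr.1, ⟨pr.2.val % s, Nat.mod_lt _ hs_pos⟩))
        · intro pr _; exact Finset.mem_univ _
        · intro pr hpr qr hqr heq
          simp only [Finset.mem_coe, hpairs, Finset.mem_filter] at hpr hqr
          simp only [Prod.mk.injEq, Fin.mk.injEq] at heq
          obtain ⟨h1, h2⟩ := heq
          have h3 : pr.2.val = qr.2.val := by
            have e1 := Nat.div_add_mod pr.2.val s
            have e2 := Nat.div_add_mod qr.2.val s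
            rw [← hpr.2.2, h1, hqr.2.2] at e1
            omega
          exact Prod.ext h1 (Fin.ext h3)
      simpa [Fintype.card_prod] using this
    have hBad_card : Bad.card ≤ n * s * n.choose k2 := by
      have hsub : Bad ⊆ pairs.biUnion
          (fun pr => PK.filter (fun J => pr.1 ∈ J ∧ pr.2 ∈ J)) := by
        intro J hJ
        simp only [hBad, Finset.mem_filter, hAdm_def, not_forall, not_lt] at hJ
        obtain ⟨hJPK, t, ht⟩ := hJ
        have h2 : 1 < (J.filter (fun j => (j : Fin n).val / s = t)).card := by omega
        obtain ⟨a, ha, b, hb, hab⟩ := Finset.one_lt_card.1 h2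
        simp only [Finset.mem_filter] at ha hb
        refine Finset.mem_biUnion.2 ⟨(a, b), ?_, ?_⟩
        · simp only [hpairs, Finset.mem_filter]
          exact ⟨Finset.mem_product.2 ⟨Finset.mem_univ _, Finset.mem_univ _⟩,
            hab, by rw [ha.2, hb.2]⟩
        · exact Finset.mem_filter.2 ⟨hJPK, ha.1, hb.1⟩
      have hbound : ∀ pr ∈ pairs,
          (PK.filter (fun J => pr.1 ∈ J ∧ pr.2 ∈ J)).card ≤ n.choose k2 := by
        intro pr hpr
        simp only [hpairs, Finset.mem_filter] at hpr
        have : (PK.filter (fun J => pr.1 ∈ J ∧ pr.2 ∈ J)).card ≤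
            (Finset.powersetCard k2 (Finset.univ : Finset (Fin n))).card := by
          apply Finset.card_le_card_of_injOn (fun J => (J.erase pr.1).erase pr.2)
          · intro J hJ
            simp only [Finset.mem_coe, Finset.mem_filter, hPK, Finset.mem_powersetCard] at hJ
            obtain ⟨⟨_, hcard⟩, h1, h2⟩ := hJ
            rw [Finset.mem_coe, Finset.mem_powersetCard]
            refine ⟨Finset.subset_univ _, ?_⟩
            rw [Finset.card_erase_of_mem (Finset.mem_erase.2 ⟨fun h => hpr.2.1 h.symm, h2⟩),
              Finset.card_erase_of_mem h1, hcard]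
            omega
          · intro J hJ K hK heq
            simp only [Finset.mem_coe, Finset.mem_filter] at hJ hK
            have hJr : J = insert pr.1 (insert pr.2 ((J.erase pr.1).erase pr.2)) := by
              rw [Finset.insert_erase (Finset.mem_erase.2 ⟨fun h => hpr.2.1 h.symm, hJ.2.2⟩),
                Finset.insert_erase hJ.2.1]
            have hKr : K = insert pr.1 (insert pr.2 ((K.erase pr.1).erase pr.2)) := by
              rw [Finset.insert_erase (Finset.mem_erase.2 ⟨fun h => hpr.2.1 h.symm, hK.2.2⟩),
                Finset.insert_erase hK.2.1]
            have heq' : (J.erase pr.1).erase pr.2 = (K.erase pr.1).erase pr.2 := heq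
            rw [hJr, hKr, heq']
        rw [Finset.card_powersetCard, Finset.card_univ, Fintype.card_fin] at this
        exact this
      calc Bad.card ≤ (pairs.biUnion
            (fun pr => PK.filter (fun J => pr.1 ∈ J ∧ pr.2 ∈ J))).card :=
          Finset.card_le_card hsub
        _ ≤ ∑ pr ∈ pairs, (PK.filter (fun J => pr.1 ∈ J ∧ pr.2 ∈ J)).card :=
          Finset.card_biUnion_le
        _ ≤ ∑ _pr ∈ pairs, n.choose k2 := Finset.sum_le_sum hbound
        _ = pairs.card * n.choose k2 := by rw [Finset.sum_const, smul_eq_mul]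
        _ ≤ n * s * n.choose k2 := Nat.mul_le_mul_right _ hpairs_card
    -- Good lower-bounds consCount
    have hGood_le : Good.card ≤ consCount S (k2+2) := by
      rw [consCount, ← Set.ncard_coe_finset]
      apply Set.ncard_le_ncard _ (Set.toFinite _)
      intro J hJ
      simp only [Finset.coe_filter, hGood, Set.mem_setOf_eq, hPK,
        Finset.mem_powersetCard] at hJ
      obtain ⟨⟨_, hcard⟩, hadm⟩ := hJ
      refine ⟨hcard, J, ?_⟩
      simp only [Set.mem_iInter]
      intro i hi
      exact ⟨hi, hadm⟩
    -- the choose identity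
    have hid : n.choose (k2+2) * ((k2+2)*(k2+1)) =
        n.choose k2 * ((n - (k2+2) + 1) * (n - (k2+2) + 2)) := by
      have h1 := Nat.choose_succ_right_eq n (k2+1)
      have h2 := Nat.choose_succ_right_eq n k2
      have e1 : n - (k2+1) = n - (k2+2) + 1 := by omega
      have e2 : n - k2 = n - (k2+2) + 2 := by omega
      calc n.choose (k2+2) * ((k2+2)*(k2+1))
          = (n.choose (k2+2) * (k2+2)) * (k2+1) := by ring
        _ = (n.choose (k2+1) * (n - (k2+1))) * (k2+1) := by rw [h1]
        _ = (n.choose (k2+1) * (k2+1)) * (n - (k2+1)) := by ring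
        _ = (n.choose k2 * (n - k2)) * (n - (k2+1)) := by rw [h2]
        _ = n.choose k2 * ((n - (k2+2) + 1) * (n - (k2+2) + 2)) := by rw [e1, e2]; ring
    -- final arithmetic
    set a : ℕ := n - (k2+2) with ha_def
    have hacast : (a : ℝ) = (n : ℝ) - (k2+2) := by
      rw [ha_def]
      push_cast [Nat.cast_sub (by omega : k2+2 ≤ n)]
      ring
    have hD_pos : 0 < n.choose k2 := Nat.choose_pos (by omega)
    have hkey : (n : ℝ) * s * ((k2+2)*(k2+1)) < (1-α) * ((a+1) * (a+2)) := by
      have hn2 : (n:ℝ)/2 ≤ (a:ℝ)+1 := by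
        rw [hacast]
        have : (2*(k2+2) + 2 : ℝ) < B := by linarith
        linarith [hBn]
      have hd : 4*(s:ℝ)*(k2+2)*(k2+2) < (1-α) * n := by
        have h1 : (4*s*(k2+2)*(k2+2) : ℝ)/(1-α) < (n:ℝ) := by linarith [hBn]
        calc (4*(s:ℝ)*(k2+2)*(k2+2)) = (1-α) * ((4*s*(k2+2)*(k2+2) : ℝ)/(1-α)) := by
              field_simp
        _ < (1-α) * n := by exact mul_lt_mul_of_pos_left h1 h1α
      have hn_pos : (0:ℝ) < n := by
        have : 0 < n := by positivity
        exact_mod_cast this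
      have hs1 : (1:ℝ) ≤ s := by exact_mod_cast hs_pos
      nlinarith [mul_le_mul hn2 hn2 (by positivity) (by linarith [hn2, hn_pos]),
        mul_pos hn_pos (by positivity : (0:ℝ) < (s:ℝ)*(k2+2)),
        mul_lt_mul_of_pos_right hd (by linarith : (0:ℝ) < (n:ℝ)/4)]
    have hBadR : (Bad.card : ℝ) < (1-α) * n.choose (k2+2) := by
      have hmul : (n : ℝ) * s * n.choose k2 * ((k2+2)*(k2+1)) <
          (1-α) * n.choose (k2+2) * ((k2+2)*(k2+1)) := by
        have hidR : (n.choose (k2+2) : ℝ) * ((k2+2)*(k2+1)) =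
            (n.choose k2 : ℝ) * (((a:ℝ)+1) * ((a:ℝ)+2)) := by
          exact_mod_cast hid
        calc (n : ℝ) * s * n.choose k2 * ((k2+2)*(k2+1))
            = (n.choose k2 : ℝ) * ((n : ℝ) * s * ((k2+2)*(k2+1))) := by ring
          _ < (n.choose k2 : ℝ) * ((1-α) * (((a:ℝ)+1) * ((a:ℝ)+2))) := by
              apply mul_lt_mul_of_pos_left hkey
              exact_mod_cast hD_pos
          _ = (1-α) * ((n.choose k2 : ℝ) * (((a:ℝ)+1) * ((a:ℝ)+2))) := by ring
          _ = (1-α) * n.choose (k2+2) * ((k2+2)*(k2+1)) := by rw [← hidR]; ring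
      have hk_pos : (0:ℝ) < ((k2+2)*(k2+1) : ℝ) := by positivity
      have h2 : (n : ℝ) * s * n.choose k2 < (1-α) * n.choose (k2+2) :=
        lt_of_mul_lt_mul_right (by convert hmul using 1 <;> ring) hk_pos.le
      calc (Bad.card : ℝ) ≤ (n * s * n.choose k2 : ℕ) := by exact_mod_cast hBad_card
        _ = (n : ℝ) * s * n.choose k2 := by push_cast; ring
        _ < (1-α) * n.choose (k2+2) := h2
    have hGoodR : (Good.card : ℝ) = (n.choose (k2+2) : ℝ) - Bad.card := by
      have := hsplit
      push_cast [← this]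
      ring
    calc α * (n.choose (k2+2) : ℝ)
        = (n.choose (k2+2) : ℝ) - (1-α) * n.choose (k2+2) := by ring
      _ < (n.choose (k2+2) : ℝ) - Bad.card := by linarith [hBadR]
      _ = Good.card := hGoodR.symm
      _ ≤ consCount S (k2+2) := by exact_mod_cast hGood_le
  · -- (p',k') failure
    intro J hJ
    have hJcard : m * p' ≤ J.card := by
      have hn_real : (n : ℝ) = (s : ℝ) * (m : ℝ) := by rw [hn_def, Nat.cast_mul]
      have h : ((m * p' : ℕ) : ℝ) ≤ (J.card : ℝ) := by
        have e : ((m * p' : ℕ) : ℝ) = (m:ℝ) * (p':ℝ) := Nat.cast_mul m p'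
        rw [e]
        calc (m : ℝ) * p' ≤ (m:ℝ) * (γ * s) :=
              mul_le_mul_of_nonneg_left hγs (Nat.cast_nonneg m)
          _ = γ * ((s:ℝ) * m) := by ring
          _ = γ * n := by rw [hn_real]
          _ ≤ J.card := hJ
      exact_mod_cast h
    -- pigeonhole
    have hpig : ∃ t, t < m ∧ p' ≤ (J.filter (fun j => (j : Fin n).val / s = t)).card := by
      by_contra hcon
      push_neg at hcon
      have hsub : J ⊆ (Finset.range m).biUnion
          (fun t => J.filter (fun j => (j : Fin n).val / s = t)) := by
        intro i hi
        refine Finset.mem_biUnion.2 ⟨i.val / s, ?_, Finset.mem_filter.2 ⟨hi, rfl⟩⟩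
        rw [Finset.mem_range]
        apply Nat.div_lt_of_lt_mul
        calc i.val < n := i.isLt
          _ = s * m := hn_def
      have : J.card ≤ m * (p' - 1) := by
        calc J.card ≤ ((Finset.range m).biUnion
              (fun t => J.filter (fun j => (j : Fin n).val / s = t))).card :=
            Finset.card_le_card hsub
          _ ≤ ∑ t ∈ Finset.range m, (J.filter (fun j => (j : Fin n).val / s = t)).card :=
            Finset.card_biUnion_le
          _ ≤ ∑ _t ∈ Finset.range m, (p' - 1) := by
            apply Finset.sum_le_sum
            intro t ht
            have := hcon t (Finset.mem_range.1 ht)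
            omega
          _ = m * (p' - 1) := by rw [Finset.sum_const, smul_eq_mul, Finset.card_range]
      have hm_pos : 0 < m := by omega
      have hmm : m * (p' - 1) + m * 1 = m * p' := by
        rw [← Nat.mul_add]
        congr 1
        omega
      have hm1 : m * 1 = m := Nat.mul_one m
      linarith [hJcard]
    obtain ⟨t, _, hT⟩ := hpig
    set T : Finset (Fin n) := J.filter (fun j => (j : Fin n).val / s = t) with hT_def
    obtain ⟨T', hT'sub, hT'card⟩ := Finset.exists_subset_card_eq hT
    set g : Fin p' → Fin n := fun ℓ => (T'.orderIsoOfFin hT'card ℓ : Fin n) with hg_def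
    have hg_inj : Function.Injective g := by
      intro x y hxy
      exact (T'.orderIsoOfFin hT'card).injective (Subtype.ext hxy)
    have hg_memT : ∀ ℓ, g ℓ ∈ T' := fun ℓ => (T'.orderIsoOfFin hT'card ℓ).2
    refine ⟨g, hg_inj, ?_, ?_⟩
    · intro ℓ
      have := hT'sub (hg_memT ℓ)
      rw [hT_def, Finset.mem_filter] at this
      exact this.1
    · intro L hL
      ext A
      simp only [Set.mem_iInter, Set.mem_empty_iff_false, iff_false, not_forall]
      by_contra hcon
      push_neg at hcon
      have hLne : L.Nonempty := by
        rw [← Finset.card_pos, hL]; omega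
      obtain ⟨ℓ₀, hℓ₀⟩ := hLne
      have hAdmA : Adm A := (hcon ℓ₀ hℓ₀).2
      have himg : L.image g ⊆ A.filter (fun j => (j : Fin n).val / s = t) := by
        intro i hi
        obtain ⟨ℓ, hℓ, rfl⟩ := Finset.mem_image.1 hi
        refine Finset.mem_filter.2 ⟨(hcon ℓ hℓ).1, ?_⟩
        have := hT'sub (hg_memT ℓ)
        rw [hT_def, Finset.mem_filter] at this
        exact this.2
      have hcard : (L.image g).card = k' := by
        rw [Finset.card_image_of_injective _ hg_inj, hL]
      have := Finset.card_le_card himg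
      rw [hcard] at this
      have := hAdmA t
      omega
end

section
/- Let X be a set, t ≥ 1, and for each i ∈ {1,…,t} let 𝓕_i be a family of subsets of X satisfying FHP_{k_i}. Then the family 𝓕 := { S_1 ∪ ⋯ ∪ S_t : S_i ∈ 𝓕_i for each i } satisfies FHP_k, where k := (k_1 + ⋯ + k_t) − t + 1. -/
/-- The family `F` satisfies `FHP(k, α, β)`. -/
def FHP {X : Type*} (F : Set (Set X)) (k : ℕ) (α β : ℝ) : Prop :=
  ∀ (n : ℕ) (S : Fin n → Set X), (∀ i, S i ∈ F) →
    α * (n.choose k : ℝ) ≤ (consCount S k : ℝ) →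
    ∃ J : Finset (Fin n), β * (n : ℝ) ≤ (J.card : ℝ) ∧ (⋂ i ∈ J, S i).Nonempty

/-- The family `F` satisfies `FHP_k`. -/
def FHPk {X : Type*} (F : Set (Set X)) (k : ℕ) : Prop :=
  ∀ α : ℝ, 0 < α → ∃ β : ℝ, 0 < β ∧ FHP F k α β

open Classical in
lemma consCount_eq_card {X : Type*} {n : ℕ} (S : Fin n → Set X) (k : ℕ) :
    consCount S k =
      (Finset.univ.filter
        (fun J : Finset (Fin n) => J.card = k ∧ (⋂ i ∈ J, S i).Nonempty)).card := by
  rw [consCount, ← Set.ncard_coe_finset]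
  congr 1
  ext J
  simp

lemma nonempty_of_FHPk {X : Type*} {F : Set (Set X)} {m : ℕ} (h : FHPk F m) (hm : 1 ≤ m) :
    Nonempty X := by
  obtain ⟨β, hβ, h⟩ := h 1 one_pos
  obtain ⟨J, _, x, _⟩ := h 0 Fin.elim0 (fun i => i.elim0) (by
    rw [Nat.choose_eq_zero_of_lt hm]
    simpa using Nat.cast_nonneg _)
  exact ⟨x⟩

lemma mem_nonempty_of_FHPk {X : Type*} {F : Set (Set X)} {m : ℕ} (h : FHPk F m) (hm : 2 ≤ m)
    {A : Set X} (hA : A ∈ F) : A.Nonempty := by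
  obtain ⟨β, hβ, h⟩ := h 1 one_pos
  obtain ⟨J, hJ, x, hx⟩ := h 1 (fun _ => A) (fun _ => hA) (by
    rw [Nat.choose_eq_zero_of_lt hm]
    simpa using Nat.cast_nonneg _)
  have hJne : J.Nonempty := by
    rw [← Finset.card_pos]
    rcases Nat.eq_zero_or_pos J.card with h | h
    · rw [h] at hJ; norm_num at hJ; linarith
    · exact h
  obtain ⟨j, hj⟩ := hJne
  have := Set.mem_iInter₂.mp hx j hj
  exact ⟨x, this⟩
/-- Let `X` be a set, `t ≥ 1`, and for each `i ∈ {1,…,t}` let `𝓕_i` be a family of subsets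
of `X` satisfying `FHP_{k_i}`. Then the family `{ S_1 ∪ ⋯ ∪ S_t : S_i ∈ 𝓕_i }` satisfies
`FHP_k` for `k := (k_1 + ⋯ + k_t) − t + 1`. -/
theorem fhp_union_closure {X : Type*} (t : ℕ) (ht : 1 ≤ t)
    (F : Fin t → Set (Set X)) (k : Fin t → ℕ)
    (hF : ∀ i, FHPk (F i) (k i)) :
    FHPk {T : Set X | ∃ S : Fin t → Set X, (∀ i, S i ∈ F i) ∧ T = ⋃ i, S i}
      ((∑ i, k i) + 1 - t) := by
  classical
  set kk := (∑ i, k i) + 1 - t with hkk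
  intro α hα
  rcases Nat.eq_zero_or_pos kk with hk0 | hk1
  · -- degenerate case kk = 0 : some k i = 0
    have hex : ∃ i0, k i0 = 0 := by
      by_contra hc
      push_neg at hc
      have h1 : t ≤ ∑ i, k i := by
        calc t = ∑ _i : Fin t, 1 := by simp
          _ ≤ ∑ i, k i := Finset.sum_le_sum fun i _ => Nat.one_le_iff_ne_zero.mpr (hc i)
      omega
    obtain ⟨i0, hi0⟩ := hex
    obtain ⟨β0, hβ0, hfhp⟩ := hF i0 (1/2) (by norm_num)
    rw [hi0] at hfhp
    refine ⟨β0, hβ0, ?_⟩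
    intro n S hS hcons
    rw [hk0] at hcons
    have hX : Nonempty X := by
      have h1 : (0:ℝ) < consCount S 0 := by
        rw [Nat.choose_zero_right, Nat.cast_one, mul_one] at hcons
        linarith
      have h2 : {J : Finset (Fin n) | J.card = 0 ∧ (⋂ i ∈ J, S i).Nonempty}.Nonempty := by
        apply Set.nonempty_of_ncard_ne_zero
        intro h
        rw [consCount, h] at h1
        norm_num at h1
      obtain ⟨J, _, x, _⟩ := h2
      exact ⟨x⟩
    choose g hg1 hg2 using hS
    have hgsub : ∀ j i, g j i ⊆ S j := fun j i => by
      rw [hg2 j]; exact Set.subset_iUnion _ i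
    obtain ⟨J, hJ1, hJ2⟩ := hfhp n (fun j => g j i0) (fun j => hg1 j i0) (by
      have h1 : 1 ≤ consCount (fun j => g j i0) 0 := by
        rw [consCount_eq_card]
        refine Finset.card_pos.mpr ⟨∅, ?_⟩
        rw [Finset.mem_filter]
        exact ⟨Finset.mem_univ _, Finset.card_empty, by simpa using Set.univ_nonempty⟩
      rw [Nat.choose_zero_right, Nat.cast_one, mul_one]
      have := Nat.one_le_cast (α := ℝ) |>.mpr h1
      linarith)
    exact ⟨J, hJ1, hJ2.mono (Set.iInter₂_mono fun j _ => hgsub j i0)⟩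
  · -- main case kk ≥ 1
    have hsum : (∑ i, k i) + 1 = kk + t := by omega
    have hX : Nonempty X := by
      have hex : ∃ i1, 1 ≤ k i1 := by
        by_contra hc
        push_neg at hc
        have h0 : ∑ i, k i = 0 := Finset.sum_eq_zero fun i _ => by have := hc i; omega
        omega
      obtain ⟨i1, hi1⟩ := hex
      exact nonempty_of_FHPk (hF i1) hi1
    have hαi : ∀ i : Fin t, 0 < α / (t * (kk.choose (k i)) + 1) := fun i => by positivity
    choose βf hβf hFHPf using fun i => hF i (α / (t * (kk.choose (k i)) + 1)) (hαi i)
    have htne : Nonempty (Fin t) := ⟨⟨0, ht⟩⟩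
    set β : ℝ := min ((Finset.univ : Finset (Fin t)).inf' Finset.univ_nonempty βf)
      (1/(kk+1)) with hβdef
    have hβpos : 0 < β := by
      apply lt_min
      · rw [Finset.lt_inf'_iff]
        exact fun i _ => hβf i
      · positivity
    refine ⟨β, hβpos, ?_⟩
    intro n S hS hcons
    choose g hg1 hg2 using hS
    have hgsub : ∀ j i, g j i ⊆ S j := fun j i => by
      rw [hg2 j]; exact Set.subset_iUnion _ i
    rcases Nat.lt_or_ge n kk with hn | hn
    · -- n < kk : degenerate
      rcases Nat.eq_zero_or_pos n with hn0 | hn0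
      · subst hn0
        refine ⟨∅, by simp, ?_⟩
        simpa using Set.univ_nonempty
      · have hkk2 : 2 ≤ kk := by omega
        have hex2 : ∃ i2, 2 ≤ k i2 := by
          by_contra hc
          push_neg at hc
          have h1 : ∑ i, k i ≤ ∑ _i : Fin t, 1 :=
            Finset.sum_le_sum fun i _ => by have := hc i; omega
          simp at h1
          omega
        obtain ⟨i2, hi2⟩ := hex2
        set j0 : Fin n := ⟨0, hn0⟩
        have hne : (g j0 i2).Nonempty := mem_nonempty_of_FHPk (hF i2) hi2 (hg1 j0 i2)
        refine ⟨{j0}, ?_, ?_⟩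
        · rw [Finset.card_singleton, Nat.cast_one]
          calc β * n ≤ (1/((kk:ℝ)+1)) * ((kk:ℝ)+1) := by
                apply mul_le_mul (min_le_right _ _)
                  (by have h : (n:ℝ) ≤ ((kk + 1 : ℕ) : ℝ) := Nat.cast_le.mpr (by omega)
                      push_cast at h
                      linarith)
                  (by positivity) (by positivity)
            _ = 1 := by
                rw [one_div_mul_cancel]
                positivity
        · simp only [Finset.mem_singleton, Set.iInter_iInter_eq_left]
          exact hne.mono (hgsub j0 i2)
    · -- main counting case kk ≤ n
      set C : Finset (Finset (Fin n)) := Finset.univ.filter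
        (fun J => J.card = kk ∧ (⋂ i ∈ J, S i).Nonempty) with hCdef
      set D : Fin t → Finset (Finset (Fin n)) := fun i => Finset.univ.filter
        (fun J => J.card = k i ∧ (⋂ j ∈ J, g j i).Nonempty) with hDdef
      have hCc : consCount S kk = C.card := consCount_eq_card S kk
      have hDc : ∀ i, consCount (fun j => g j i) (k i) = (D i).card :=
        fun i => consCount_eq_card _ _
      have key : ∀ J ∈ C, ∃ (i : Fin t) (J' : Finset (Fin n)),
          J' ⊆ J ∧ J'.card = k i ∧ (⋂ j ∈ J', g j i).Nonempty := by
        intro J hJ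
        rw [hCdef, Finset.mem_filter] at hJ
        obtain ⟨-, hcard, x, hx⟩ := hJ
        have hxf : ∀ j : Fin n, ∃ i : Fin t, j ∈ J → x ∈ g j i := by
          intro j
          by_cases hj : j ∈ J
          · have h1 : x ∈ S j := Set.mem_iInter₂.mp hx j hj
            rw [hg2 j] at h1
            obtain ⟨i, hi⟩ := Set.mem_iUnion.mp h1
            exact ⟨i, fun _ => hi⟩
          · exact ⟨⟨0, ht⟩, fun h => absurd h hj⟩
        choose f hf using hxf
        have hsumfib : ∑ i : Fin t, (J.filter (fun j => f j = i)).card = kk := by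
          rw [← Finset.card_eq_sum_card_fiberwise (fun j _ => Finset.mem_univ (f j))]
          exact hcard
        have hexi : ∃ i, k i ≤ (J.filter (fun j => f j = i)).card := by
          by_contra hc
          push_neg at hc
          have h2 : kk + t ≤ ∑ i, k i := by
            calc kk + t = ∑ i : Fin t, ((J.filter (fun j => f j = i)).card + 1) := by
                  rw [Finset.sum_add_distrib, hsumfib]; simp
              _ ≤ ∑ i, k i := Finset.sum_le_sum fun i _ => hc i
          omega
        obtain ⟨i, hi⟩ := hexi
        obtain ⟨J', hJ'sub, hJ'card⟩ := Finset.exists_subset_card_eq hi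
        refine ⟨i, J', hJ'sub.trans (Finset.filter_subset _ _), hJ'card, x, ?_⟩
        refine Set.mem_iInter₂.mpr fun j hj => ?_
        have h3 := hJ'sub hj
        rw [Finset.mem_filter] at h3
        rw [← h3.2]
        exact hf j h3.1
      have key' : ∀ J : Finset (Fin n), ∃ (i : Fin t) (J' : Finset (Fin n)),
          J ∈ C → (J' ⊆ J ∧ J'.card = k i ∧ (⋂ j ∈ J', g j i).Nonempty) := fun J => by
        by_cases hJ : J ∈ C
        · obtain ⟨i, J', h⟩ := key J hJ
          exact ⟨i, J', fun _ => h⟩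
        · exact ⟨⟨0, ht⟩, ∅, fun h => absurd h hJ⟩
      choose fi fJ hkey using key'
      set filt : Finset (Fin t) := Finset.univ.filter (fun i => k i ≤ kk) with hfiltdef
      set T : Finset ((_ : Fin t) × (_ : Finset (Fin n)) × Finset (Fin n)) :=
        filt.sigma (fun i => (D i).sigma
          (fun J' => (Finset.univ \ J').powersetCard (kk - k i))) with hTdef
      have hCcard : ∀ J ∈ C, J.card = kk := by
        intro J hJ
        rw [hCdef, Finset.mem_filter] at hJ
        exact hJ.2.1
      have hinj : C.card ≤ T.card := by
        apply Finset.card_le_card_of_injOn (fun J => ⟨fi J, fJ J, J \ fJ J⟩)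
        · intro J hJ
          obtain ⟨hsub, hcard, hne⟩ := hkey J hJ
          have hJk := hCcard J hJ
          rw [hTdef]
          simp only [Finset.mem_coe, Finset.mem_sigma]
          refine ⟨?_, ?_, ?_⟩
          · rw [hfiltdef, Finset.mem_filter]
            refine ⟨Finset.mem_univ _, ?_⟩
            rw [← hcard, ← hJk]
            exact Finset.card_le_card hsub
          · rw [hDdef, Finset.mem_filter]
            exact ⟨Finset.mem_univ _, hcard, hne⟩
          · rw [Finset.mem_powersetCard]
            constructor
            · exact Finset.sdiff_subset_sdiff (Finset.subset_univ J) le_rfl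
            · rw [Finset.card_sdiff_of_subset hsub, hJk, hcard]
        · intro J1 h1 J2 h2 heq
          simp only [Sigma.mk.inj_iff, heq_eq_eq] at heq
          obtain ⟨e1, e2, e3⟩ := heq
          have hs1 := (hkey J1 (Finset.mem_coe.mp h1)).1
          have hs2 := (hkey J2 (Finset.mem_coe.mp h2)).1
          calc J1 = fJ J1 ∪ (J1 \ fJ J1) := (Finset.union_sdiff_of_subset hs1).symm
            _ = fJ J2 ∪ (J2 \ fJ J2) := by rw [e3, e2]
            _ = J2 := Finset.union_sdiff_of_subset hs2
      have hTcard : T.card = ∑ i ∈ filt, (D i).card * ((n - k i).choose (kk - k i)) := by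
        rw [hTdef, Finset.card_sigma]
        refine Finset.sum_congr rfl fun i _ => ?_
        rw [Finset.card_sigma]
        rw [Finset.sum_congr rfl (fun J' hJ' => ?_), Finset.sum_const, smul_eq_mul]
        have hJ'k : J'.card = k i := by
          rw [hDdef, Finset.mem_filter] at hJ'
          exact hJ'.2.1
        rw [Finset.card_powersetCard, Finset.card_sdiff_of_subset (Finset.subset_univ _),
          Finset.card_univ, Fintype.card_fin, hJ'k]
      have hfilt_ne : filt.Nonempty := by
        rw [hfiltdef]
        by_contra hc
        rw [Finset.not_nonempty_iff_eq_empty, Finset.filter_eq_empty_iff] at hc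
        push_neg at hc
        have h3 : t * (kk + 1) ≤ ∑ i, k i := by
          calc t * (kk + 1) = ∑ _i : Fin t, (kk + 1) := by simp [mul_comm]
            _ ≤ ∑ i, k i := Finset.sum_le_sum fun i _ => hc (Finset.mem_univ i)
        have h4 : kk ≤ t * kk := Nat.le_mul_of_pos_left _ ht
        have h5 : t * (kk + 1) = t * kk + t := by ring
        omega
      have hmain : ∃ i ∈ filt, α/t * (n.choose kk : ℝ) ≤
          ((D i).card : ℝ) * (((n - k i).choose (kk - k i) : ℕ) : ℝ) := by
        apply Finset.exists_le_of_sum_le hfilt_ne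
        have hfc : (filt.card : ℝ) ≤ t := by
          have := Finset.card_le_card (Finset.subset_univ filt)
          rw [Finset.card_univ, Fintype.card_fin] at this
          exact_mod_cast this
        have ht0 : (0:ℝ) < t := by exact_mod_cast ht
        have hstep1 : ∑ _i ∈ filt, (α/t * (n.choose kk : ℝ)) ≤ α * (n.choose kk : ℝ) := by
          calc ∑ _i ∈ filt, (α/t * (n.choose kk : ℝ))
              = (filt.card : ℝ) * (α/t * (n.choose kk : ℝ)) := by
                rw [Finset.sum_const, nsmul_eq_mul]
            _ ≤ (t:ℝ) * (α/t * (n.choose kk : ℝ)) :=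
                mul_le_mul_of_nonneg_right hfc (by positivity)
            _ = α * (n.choose kk : ℝ) := by field_simp
        have hstep2 : α * (n.choose kk : ℝ) ≤ (C.card : ℝ) := by
          rw [hCc] at hcons
          exact hcons
        have hstep3 : (C.card : ℝ) ≤ ∑ i ∈ filt,
            ((D i).card : ℝ) * (((n - k i).choose (kk - k i) : ℕ) : ℝ) := by
          have := hinj
          rw [hTcard] at this
          push_cast
          calc (C.card : ℝ) ≤ ((∑ i ∈ filt, (D i).card * ((n - k i).choose (kk - k i)) : ℕ) : ℝ) := by
                exact_mod_cast this
            _ = _ := by push_cast; ring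
        linarith
      obtain ⟨i, hifilt, hDi⟩ := hmain
      have hki : k i ≤ kk := by
        rw [hfiltdef, Finset.mem_filter] at hifilt
        exact hifilt.2
      have hid : (n.choose kk) * (kk.choose (k i)) =
          (n.choose (k i)) * ((n - k i).choose (kk - k i)) := Nat.choose_mul hki
      -- real arithmetic to get the α_i bound
      have hbound : α / (t * (kk.choose (k i)) + 1) * (n.choose (k i) : ℝ) ≤
          ((D i).card : ℝ) := by
        set a : ℝ := (n.choose kk : ℝ) with ea
        set b : ℝ := (((n - k i).choose (kk - k i) : ℕ) : ℝ) with eb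
        set c : ℝ := (n.choose (k i) : ℝ) with ec
        set d : ℝ := ((kk.choose (k i) : ℕ) : ℝ) with ed
        set Dc : ℝ := ((D i).card : ℝ) with eD
        have hidR : a * d = c * b := by
          rw [ea, eb, ec, ed]
          exact_mod_cast hid
        have hb : (0:ℝ) < b := by
          rw [eb]
          exact_mod_cast Nat.choose_pos (show kk - k i ≤ n - k i by omega)
        have hd : (0:ℝ) < d := by
          rw [ed]
          exact_mod_cast Nat.choose_pos hki
        have ht0 : (0:ℝ) < t := by exact_mod_cast ht
        have hDc0 : (0:ℝ) ≤ Dc := by rw [eD]; exact Nat.cast_nonneg _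
        have h9 : α * c ≤ t * Dc * d := by
          have h6 : α/t * a * t * d ≤ Dc * b * t * d :=
            mul_le_mul_of_nonneg_right
              (mul_le_mul_of_nonneg_right hDi ht0.le) hd.le
          have e1 : α/t * a * t * d = α * c * b := by
            calc α/t * a * t * d = α * (a * d) := by field_simp
              _ = α * (c * b) := by rw [hidR]
              _ = α * c * b := by ring
          have e2 : Dc * b * t * d = t * Dc * d * b := by ring
          have h7 : α * c * b ≤ t * Dc * d * b := by linarith
          exact le_of_mul_le_mul_right h7 hb
        rw [div_mul_eq_mul_div, div_le_iff₀ (by positivity)]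
        nlinarith [h9, hDc0, hd.le, ht0.le]
      obtain ⟨J, hJ1, hJ2⟩ := hFHPf i n (fun j => g j i) (fun j => hg1 j i) (by
        rw [hDc i]
        exact_mod_cast hbound)
      refine ⟨J, le_trans ?_ hJ1, hJ2.mono (Set.iInter₂_mono fun j _ => hgsub j i)⟩
      apply mul_le_mul_of_nonneg_right _ (Nat.cast_nonneg n)
      exact (min_le_left _ _).trans (Finset.inf'_le _ (Finset.mem_univ i))
end

section
/- For each k ∈ ℕ there exists a real γ > 0 (depending only on k) such that: for every set X, every n ∈ ℕ, and every tuple (S_1, …, S_n) of k-element subsets of X (repetitions allowed), there exist pairwise disjoint subsets X_1, …, X_k of X and a set I ⊆ {1,…,n} with |I| ≥ γ·n such that |S_i ∩ X_j| = 1 for every i ∈ I and every j ∈ {1,…,k}. -/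
open Finset

lemma count_inj_colorings {α : Type*} [Fintype α] [DecidableEq α] (k : ℕ)
    (p : α → Prop) [DecidablePred p] (hA : Fintype.card {a // p a} = k) :
    Fintype.card {c : α → Fin k // Function.Injective (fun a : {a // p a} => c a.1)} =
      k.factorial * k ^ (Fintype.card α - k) := by
  classical
  let E : (α → Fin k) ≃ ({a // p a} → Fin k) × ({a // ¬ p a} → Fin k) :=
    ((Equiv.sumCompl p).arrowCongr (Equiv.refl (Fin k))).symm.trans
      (Equiv.sumArrowEquivProdArrow _ _ _)
  have hE : ∀ c : α → Fin k, (E c).1 = fun a : {a // p a} => c a.1 := fun c => rfl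
  have e1 : {c : α → Fin k // Function.Injective (fun a : {a // p a} => c a.1)} ≃
      {fg : ({a // p a} → Fin k) × ({a // ¬ p a} → Fin k) // Function.Injective fg.1} :=
    E.subtypeEquiv (fun c => by rw [hE c])
  have e2 : {fg : ({a // p a} → Fin k) × ({a // ¬ p a} → Fin k) // Function.Injective fg.1} ≃
      {f : {a // p a} → Fin k // Function.Injective f} × ({a // ¬ p a} → Fin k) :=
    { toFun := fun x => (⟨x.1.1, x.2⟩, x.1.2)
      invFun := fun x => ⟨(x.1.1, x.2), x.1.2⟩
      left_inv := fun x => rfl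
      right_inv := fun x => rfl }
  rw [Fintype.card_congr (e1.trans e2), Fintype.card_prod,
    Fintype.card_congr (Equiv.subtypeInjectiveEquivEmbedding _ _),
    Fintype.card_embedding_eq, Fintype.card_fun, hA, Fintype.card_fin,
    Nat.descFactorial_self, Fintype.card_subtype_compl, hA]

/-- (Füredi's sunflower-type lemma, multiset version.) For each `k ∈ ℕ` there exists a real
`γ > 0` (depending only on `k`) such that: for every set `X`, every `n ∈ ℕ`, and every
tuple `(S_1, …, S_n)` of `k`-element subsets of `X` (repetitions allowed), there exist
pairwise disjoint subsets `X_1, …, X_k` of `X` and a set `I ⊆ {1,…,n}` with `|I| ≥ γ·n`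
such that `|S_i ∩ X_j| = 1` for every `i ∈ I` and every `j ∈ {1,…,k}`. -/
theorem furedi_with_repetitions (k : ℕ) :
    ∃ γ : ℝ, 0 < γ ∧
      ∀ (X : Type*) (n : ℕ) (S : Fin n → Set X),
        (∀ i, (S i).Finite ∧ (S i).ncard = k) →
        ∃ (Xs : Fin k → Set X) (I : Finset (Fin n)),
          (∀ j j' : Fin k, j ≠ j' → Disjoint (Xs j) (Xs j')) ∧
          γ * (n : ℝ) ≤ (I.card : ℝ) ∧
          ∀ i ∈ I, ∀ j : Fin k, (S i ∩ Xs j).ncard = 1 := by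
  classical
  refine ⟨(k.factorial : ℝ) / (k : ℝ) ^ k, ?_, ?_⟩
  · rcases Nat.eq_zero_or_pos k with hk | hk
    · subst hk; norm_num
    · apply div_pos (by positivity)
      positivity
  intro X n S hS
  set γ : ℝ := (k.factorial : ℝ) / (k : ℝ) ^ k with hγ
  rcases Nat.eq_zero_or_pos n with hn | hn
  · subst hn
    exact ⟨fun _ => ∅, ∅, fun j j' _ => by simp, by simp, by simp⟩
  rcases Nat.eq_zero_or_pos k with hk | hk
  · subst hk
    refine ⟨Fin.elim0, Finset.univ, fun j j' _ => j.elim0, ?_, fun i _ j => j.elim0⟩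
    simp [hγ]
  -- main case
  let F : Fin n → Finset X := fun i => (hS i).1.toFinset
  have hF : ∀ i, (F i).card = k := fun i => by
    rw [← Set.ncard_eq_toFinset_card (S i) (hS i).1]; exact (hS i).2
  have hFS : ∀ i, ↑(F i) = S i := fun i => Set.Finite.coe_toFinset _
  let U : Finset X := Finset.univ.biUnion F
  have hFU : ∀ i, F i ⊆ U := fun i => Finset.subset_biUnion_of_mem F (mem_univ i)
  set m := U.card with hm
  have hcardU : Fintype.card {x // x ∈ U} = m := Fintype.card_coe U
  have hkm : k ≤ m := by
    rw [← hF ⟨0, hn⟩]; exact Finset.card_le_card (hFU ⟨0, hn⟩)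
  -- for each i, the set of "good" vertices inside U
  have hcardA : ∀ i, Fintype.card {a : {x // x ∈ U} // a.1 ∈ F i} = k := by
    intro i
    rw [Fintype.card_congr (Equiv.subtypeSubtypeEquivSubtype
      (fun {x} (hx : x ∈ F i) => hFU i hx))]
    rw [Fintype.card_coe]; exact hF i
  set R : Fin n → ({x // x ∈ U} → Fin k) → Prop :=
    fun i c => Function.Injective (fun a : {a : {x // x ∈ U} // a.1 ∈ F i} => c a.1) with hR
  have hcount : ∀ i, Fintype.card {c : {x // x ∈ U} → Fin k // R i c} =
      k.factorial * k ^ (m - k) := by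
    intro i
    rw [← hcardU]
    exact count_inj_colorings k _ (hcardA i)
  set N : ({x // x ∈ U} → Fin k) → ℕ :=
    fun c => (Finset.univ.filter (fun i => R i c)).card with hN
  have hsum : ∑ c : {x // x ∈ U} → Fin k, N c = n * (k.factorial * k ^ (m - k)) := by
    have : ∀ c, N c = ∑ i : Fin n, if R i c then 1 else 0 := fun c =>
      Finset.card_filter _ _
    simp_rw [this]
    rw [Finset.sum_comm]
    have : ∀ i : Fin n, ∑ c : {x // x ∈ U} → Fin k, (if R i c then 1 else 0) =
        k.factorial * k ^ (m - k) := by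
      intro i
      rw [← Finset.card_filter, ← Fintype.card_subtype, hcount i]
    simp_rw [this, Finset.sum_const, Finset.card_univ, Fintype.card_fin, smul_eq_mul]
  have hT : Fintype.card ({x // x ∈ U} → Fin k) = k ^ m := by
    rw [Fintype.card_fun, Fintype.card_fin, hcardU]
  have hk0 : (0:ℝ) < (k:ℝ) := by exact_mod_cast hk
  -- averaging
  have key : ∃ c : {x // x ∈ U} → Fin k, γ * n ≤ (N c : ℝ) := by
    haveI : Nonempty ({x // x ∈ U} → Fin k) := ⟨fun _ => ⟨0, hk⟩⟩
    have hne : (Finset.univ : Finset ({x // x ∈ U} → Fin k)).Nonempty :=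
      Finset.univ_nonempty
    have hsums : ∑ _c : {x // x ∈ U} → Fin k, (γ * n) ≤
        ∑ c : {x // x ∈ U} → Fin k, (N c : ℝ) := by
      rw [Finset.sum_const, Finset.card_univ, hT, ← Nat.cast_sum, hsum]
      have hpow : (k:ℝ) ^ (m - k) * (k:ℝ) ^ k = (k:ℝ) ^ m := by
        rw [← pow_add, Nat.sub_add_cancel hkm]
      apply le_of_eq
      rw [nsmul_eq_mul]
      push_cast
      rw [hγ, ← hpow]
      field_simp
    obtain ⟨c, _, hc⟩ := Finset.exists_le_of_sum_le hne hsums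
    exact ⟨c, hc⟩
  obtain ⟨c, hc⟩ := key
  let j0 : Fin k := ⟨0, hk⟩
  let ec : X → Fin k := fun x => if h : x ∈ U then c ⟨x, h⟩ else j0
  refine ⟨fun j => ec ⁻¹' {j}, Finset.univ.filter (fun i => R i c), ?_, hc, ?_⟩
  · intro j j' hjj'
    rw [Set.disjoint_left]
    intro x hx hx'
    exact hjj' (hx.symm.trans hx')
  · intro i hi j
    have hRi : R i c := (Finset.mem_filter.mp hi).2
    -- the coloring restricted to F i is bijective
    have hginj : Function.Injective (fun x : {x // x ∈ F i} => ec x.1) := by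
      intro x y hxy
      have hx : ec x.1 = c ⟨x.1, hFU i x.2⟩ := dif_pos (hFU i x.2)
      have hy : ec y.1 = c ⟨y.1, hFU i y.2⟩ := dif_pos (hFU i y.2)
      have : c ⟨x.1, hFU i x.2⟩ = c ⟨y.1, hFU i y.2⟩ := by
        rw [← hx, ← hy]; exact hxy
      have := hRi (a₁ := ⟨⟨x.1, hFU i x.2⟩, x.2⟩) (a₂ := ⟨⟨y.1, hFU i y.2⟩, y.2⟩) this
      have h2 : (⟨x.1, hFU i x.2⟩ : {x // x ∈ U}) = ⟨y.1, hFU i y.2⟩ :=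
        congrArg Subtype.val this
      have h3 : (x : X) = (y : X) := by simpa using h2
      exact Subtype.ext h3
    have hgbij : Function.Bijective (fun x : {x // x ∈ F i} => ec x.1) := by
      rw [Fintype.bijective_iff_injective_and_card]
      exact ⟨hginj, by rw [Fintype.card_coe, hF i, Fintype.card_fin]⟩
    obtain ⟨x₀, hx₀, hx₀u⟩ := hgbij.existsUnique j
    have hset : S i ∩ (ec ⁻¹' {j}) = ↑((F i).filter (fun x => ec x = j)) := by
      ext x
      simp only [Set.mem_inter_iff, ← hFS i, Set.mem_preimage, Set.mem_singleton_iff,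
        Finset.coe_filter, Set.mem_setOf_eq, Finset.mem_coe]
    rw [hset, Set.ncard_coe_finset]
    rw [Finset.card_eq_one]
    refine ⟨x₀.1, Finset.eq_singleton_iff_unique_mem.mpr ⟨?_, ?_⟩⟩
    · exact Finset.mem_filter.mpr ⟨x₀.2, hx₀⟩
    · intro y hy
      obtain ⟨hy1, hy2⟩ := Finset.mem_filter.mp hy
      exact congrArg Subtype.val (hx₀u ⟨y, hy1⟩ hy2)
end

section
/- Let X be a set, let k, d, m ≥ 1 be integers, and let S_{i,j} ⊆ X for (i,j) ∈ {1,…,k} × {1,…,m} be such that: (i) for every function f : {1,…,k} → {1,…,m}, ⋂_{i=1}^{k} S_{i,f(i)} ≠ ∅; and (ii) for every i ∈ {1,…,k} and every d-element subset J of {1,…,m}, ⋂_{j∈J} S_{i,j} = ∅. Set n := k·m. Then the number of k-element subsets T of {1,…,k} × {1,…,m} with ⋂_{(i,j)∈T} S_{i,j} ≠ ∅ is at least (1/k^k)·binom(n,k), while every subset T of {1,…,k} × {1,…,m} with ⋂_{(i,j)∈T} S_{i,j} ≠ ∅ satisfies |T| ≤ (d−1)·k. -/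
/-- (Combinatorial core of "FHP implies NTP₂".) Let `X` be a set, `k, d, m ≥ 1` integers,
and `S_{i,j} ⊆ X` for `(i,j) ∈ {1,…,k} × {1,…,m}` such that every transversal (one set per
row) has non-empty intersection while any `d` sets from a single row have empty
intersection. Set `n := k·m`. Then the number of `k`-element subsets `T` of
`{1,…,k} × {1,…,m}` with `⋂_{(i,j)∈T} S_{i,j} ≠ ∅` is at least `(1/k^k)·binom(n,k)`,
while every subset `T` with `⋂_{(i,j)∈T} S_{i,j} ≠ ∅` satisfies `|T| ≤ (d−1)·k`. -/
theorem tp2_array_counting {X : Type*} (k d m : ℕ) (hk : 1 ≤ k) (hd : 1 ≤ d) (hm : 1 ≤ m)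
    (S : Fin k → Fin m → Set X)
    (h1 : ∀ f : Fin k → Fin m, (⋂ i, S i (f i)).Nonempty)
    (h2 : ∀ i : Fin k, ∀ J : Finset (Fin m), J.card = d → ⋂ j ∈ J, S i j = ∅) :
    (1 / (k : ℝ) ^ k) * ((k * m).choose k : ℝ) ≤
      ({T : Finset (Fin k × Fin m) | T.card = k ∧
        (⋂ p ∈ T, S p.1 p.2).Nonempty}.ncard : ℝ) ∧
    ∀ T : Finset (Fin k × Fin m), (⋂ p ∈ T, S p.1 p.2).Nonempty → T.card ≤ (d - 1) * k := by
  constructor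
  · set A : Set (Finset (Fin k × Fin m)) :=
      {T : Finset (Fin k × Fin m) | T.card = k ∧ (⋂ p ∈ T, S p.1 p.2).Nonempty} with hA
    set F : (Fin k → Fin m) → Finset (Fin k × Fin m) :=
      fun f => Finset.univ.image (fun i => (i, f i)) with hF
    have hmem : ∀ f i, (i, f i) ∈ F f := by
      intro f i; simp [hF]
    have hFinj : Function.Injective F := by
      intro f g h
      funext i
      have : (i, f i) ∈ F g := h ▸ hmem f i
      simp only [hF, Finset.mem_image, Finset.mem_univ, true_and, Prod.mk.injEq] at this
      obtain ⟨a, ha1, ha2⟩ := this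
      rw [← ha1] at ha2 ⊢
      exact ha2.symm
    have hrange : Set.range F ⊆ A := by
      rintro _ ⟨f, rfl⟩
      constructor
      · rw [hF]
        rw [Finset.card_image_of_injective _ (fun a b hab => (Prod.mk.injEq _ _ _ _ ▸ hab).1)]
        simp
      · obtain ⟨x, hx⟩ := h1 f
        refine ⟨x, ?_⟩
        simp only [Set.mem_iInter] at hx ⊢
        intro p hp
        simp only [hF, Finset.mem_image, Finset.mem_univ, true_and] at hp
        obtain ⟨a, rfl⟩ := hp
        exact hx a
    have hcard : (m : ℕ) ^ k ≤ A.ncard := by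
      have h1' : (Set.range F).ncard = m ^ k := by
        rw [← Nat.card_coe_set_eq, Nat.card_range_of_injective hFinj]
        simp [Nat.card_eq_fintype_card]
      calc m ^ k = (Set.range F).ncard := h1'.symm
        _ ≤ A.ncard := Set.ncard_le_ncard hrange (Set.toFinite A)
    have hchoose : ((k * m).choose k : ℝ) ≤ (k : ℝ) ^ k * (m : ℝ) ^ k := by
      have := Nat.choose_le_pow (k * m) k
      calc ((k * m).choose k : ℝ) ≤ ((k * m : ℕ) : ℝ) ^ k := by exact_mod_cast this
        _ = (k : ℝ) ^ k * (m : ℝ) ^ k := by push_cast; ring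
    have hkpos : (0 : ℝ) < (k : ℝ) ^ k := by positivity
    rw [div_mul_eq_mul_div, one_mul, div_le_iff₀ hkpos]
    calc ((k * m).choose k : ℝ) ≤ (k : ℝ) ^ k * (m : ℝ) ^ k := hchoose
      _ ≤ (A.ncard : ℝ) * (k : ℝ) ^ k := by
          rw [mul_comm]
          gcongr
          exact_mod_cast hcard
  · intro T ⟨x, hx⟩
    simp only [Set.mem_iInter] at hx
    have hrow : ∀ i : Fin k, (T.filter fun p => p.1 = i).card ≤ d - 1 := by
      intro i
      by_contra hcon
      push_neg at hcon
      have hd' : d ≤ (T.filter fun p => p.1 = i).card := by omega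
      have hJ : d ≤ ((T.filter fun p => p.1 = i).image Prod.snd).card := by
        rw [Finset.card_image_of_injOn]
        · exact hd'
        · intro p hp q hq hpq
          simp only [Finset.mem_coe, Finset.mem_filter] at hp hq
          exact Prod.ext (hp.2.trans hq.2.symm) hpq
      obtain ⟨J, hJsub, hJcard⟩ := Finset.exists_subset_card_eq hJ
      have := h2 i J hJcard
      have hxJ : x ∈ ⋂ j ∈ J, S i j := by
        simp only [Set.mem_iInter]
        intro j hj
        have := hJsub hj
        simp only [Finset.mem_image, Finset.mem_filter] at this
        obtain ⟨p, ⟨hpT, hp1⟩, hp2⟩ := this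
        have := hx p hpT
        rwa [hp1, hp2] at this
      rw [this] at hxJ
      exact hxJ
    calc T.card = ∑ i : Fin k, (T.filter fun p => p.1 = i).card :=
          Finset.card_eq_sum_card_fiberwise (fun p _ => Finset.mem_univ p.1)
      _ ≤ ∑ _i : Fin k, (d - 1) := Finset.sum_le_sum (fun i _ => hrow i)
      _ = (d - 1) * k := by simp [mul_comm]
end

section
/- Let (X, μ) and (Y, ν) be probability spaces, d ≥ 1 an integer, and α > 0 a real. Let E ⊆ X × Y be measurable with respect to the product σ-algebra, with (μ ⊗ ν)(E) ≥ α. Let Γ := { (x, y_1, …, y_d) ∈ X × Y^d : (x, y_i) ∈ E for all i ∈ {1,…,d} }. Then (μ ⊗ ν^{⊗d})(Γ) ≥ α^d, where ν^{⊗d} is the d-fold product of ν with itself on Y^d. -/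
open MeasureTheory
open scoped ENNReal

/-- (Hölder claim.) Let `(X, μ)` and `(Y, ν)` be probability spaces, `d ≥ 1`, and `α > 0`.
Let `E ⊆ X × Y` be measurable for the product σ-algebra with `(μ ⊗ ν)(E) ≥ α`, and let
`Γ := {(x, y_1, …, y_d) : (x, y_i) ∈ E for all i}`. Then `(μ ⊗ ν^{⊗d})(Γ) ≥ α^d`. -/
theorem holder_fibre_power {X Y : Type*} [MeasurableSpace X] [MeasurableSpace Y]
    (μ : Measure X) (ν : Measure Y) [IsProbabilityMeasure μ] [IsProbabilityMeasure ν]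
    (d : ℕ) (hd : 1 ≤ d) (α : ℝ) (hα : 0 < α)
    (E : Set (X × Y)) (hE : MeasurableSet E)
    (hEα : ENNReal.ofReal α ≤ μ.prod ν E) :
    ENNReal.ofReal (α ^ d) ≤
      μ.prod (Measure.pi fun _ : Fin d => ν)
        {p : X × (Fin d → Y) | ∀ i : Fin d, (p.1, p.2 i) ∈ E} := by
  set f : X → ℝ≥0∞ := fun x => ν (Prod.mk x ⁻¹' E) with hf
  have hfm : Measurable f := measurable_measure_prodMk_left hE
  have hΓm : MeasurableSet {p : X × (Fin d → Y) | ∀ i : Fin d, (p.1, p.2 i) ∈ E} := by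
    have : {p : X × (Fin d → Y) | ∀ i : Fin d, (p.1, p.2 i) ∈ E}
        = ⋂ i : Fin d, (fun p : X × (Fin d → Y) => (p.1, p.2 i)) ⁻¹' E := by
      ext p; simp
    rw [this]
    exact MeasurableSet.iInter fun i =>
      hE.preimage (measurable_fst.prodMk ((measurable_pi_apply i).comp measurable_snd))
  -- measure of Γ as an integral of f^d
  have hΓ : μ.prod (Measure.pi fun _ : Fin d => ν)
      {p : X × (Fin d → Y) | ∀ i : Fin d, (p.1, p.2 i) ∈ E} = ∫⁻ x, f x ^ d ∂μ := by
    rw [Measure.prod_apply hΓm]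
    refine lintegral_congr fun x => ?_
    have : (Prod.mk x ⁻¹' {p : X × (Fin d → Y) | ∀ i : Fin d, (p.1, p.2 i) ∈ E})
        = Set.pi Set.univ fun _ : Fin d => Prod.mk x ⁻¹' E := by
      ext y; simp [Set.mem_pi]
    rw [this, Measure.pi_pi]
    simp [f]
  have hprod : μ.prod ν E = ∫⁻ x, f x ∂μ := Measure.prod_apply hE
  -- Jensen via Hölder: ∫ f ≤ (∫ f^d)^(1/d)
  have hd0 : (0:ℝ) < d := by exact_mod_cast hd
  have key : ∫⁻ x, f x ∂μ ≤ (∫⁻ x, f x ^ d ∂μ) ^ ((d:ℝ)⁻¹) := by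
    have h := ENNReal.lintegral_mul_norm_pow_le (μ := μ)
      (f := fun x => f x ^ d) (g := fun _ => (1:ℝ≥0∞))
      ((hfm.pow_const d).aemeasurable) aemeasurable_const
      (p := (d:ℝ)⁻¹) (q := 1 - (d:ℝ)⁻¹)
      (by positivity) (by
        have : (d:ℝ)⁻¹ ≤ 1 := by
          rw [inv_le_one_iff₀]; right; exact_mod_cast hd
        linarith) (by ring)
    simp only [ENNReal.one_rpow, mul_one, lintegral_one, measure_univ] at h
    calc ∫⁻ x, f x ∂μ = ∫⁻ x, (f x ^ d) ^ ((d:ℝ)⁻¹) ∂μ := by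
          refine lintegral_congr fun x => ?_
          rw [← ENNReal.rpow_natCast (f x) d, ← ENNReal.rpow_mul,
            mul_inv_cancel₀ hd0.ne', ENNReal.rpow_one]
      _ ≤ (∫⁻ x, f x ^ d ∂μ) ^ ((d:ℝ)⁻¹) := h
  rw [hΓ]
  calc ENNReal.ofReal (α ^ d) = ENNReal.ofReal α ^ d := by
        rw [ENNReal.ofReal_pow hα.le]
    _ ≤ (∫⁻ x, f x ∂μ) ^ d := pow_le_pow_left' (hprod ▸ hEα) d
    _ ≤ ((∫⁻ x, f x ^ d ∂μ) ^ ((d:ℝ)⁻¹)) ^ d := pow_le_pow_left' key d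
    _ = ∫⁻ x, f x ^ d ∂μ := by
        rw [← ENNReal.rpow_natCast _ d, ← ENNReal.rpow_mul,
          inv_mul_cancel₀ hd0.ne', ENNReal.rpow_one]
end

section
/- Let X and Y be sets and let E ⊆ X × Y be a relation such that for every m ∈ ℕ there exists a set S ⊆ Y with |S| = m that is dually shattered by E, i.e., for every S' ⊆ S there is e ∈ X such that for all c ∈ S: (e, c) ∈ E if and only if c ∈ S'. For b_1, b_2 ∈ Y set D(b_1, b_2) := { x ∈ X : (x, b_1) ∈ E and (x, b_2) ∉ E }. Then for every integer q ≥ 2 there exists p ≥ q such that for every N ∈ ℕ there is a finite family 𝓓' of sets of the form D(b_1, b_2) with b_1 ≠ b_2 ∈ Y which satisfies the (p, q)-property but admits no transversal of size at most N. -/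
/-- `Dset E b₁ b₂` is the set `{x ∈ X : (x, b₁) ∈ E ∧ (x, b₂) ∉ E}`. -/
def Dset {X Y : Type*} (E : Set (X × Y)) (b₁ b₂ : Y) : Set X :=
  {x | (x, b₁) ∈ E ∧ (x, b₂) ∉ E}

/-- Greedy extraction of an independent set in the "conflict graph" of pairs. -/
lemma greedy_indep {ι : Type*} [DecidableEq ι] [Fintype ι] (F S : ι → ℕ)
    (hFS : ∀ k, F k < S k) (d : ℕ)
    (hdeg : ∀ k, (Finset.univ.filter (fun l => F l = S k ∨ S l = F k)).card ≤ d) :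
    ∀ t : ℕ, ∀ T : Finset ι, t * (d + 1) ≤ T.card →
      ∃ I, I ⊆ T ∧ I.card = t ∧ ∀ k ∈ I, ∀ l ∈ I, F k ≠ S l := by
  intro t
  induction t with
  | zero => exact fun T _ => ⟨∅, by simp⟩
  | succ t ih =>
    intro T hT
    have hpos : 0 < T.card := lt_of_lt_of_le (by positivity) hT
    obtain ⟨k, hk⟩ := Finset.card_pos.1 hpos
    set B := insert k (Finset.univ.filter (fun l => F l = S k ∨ S l = F k)) with hBdef
    have hBcard : B.card ≤ d + 1 :=
      (Finset.card_insert_le _ _).trans (by have := hdeg k; omega)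
    have hT' : t * (d + 1) ≤ (T \ B).card := by
      have h1 := Finset.le_card_sdiff B T
      have h2 : (t + 1) * (d + 1) = t * (d + 1) + (d + 1) := by ring
      omega
    obtain ⟨I, hIsub, hIcard, hind⟩ := ih (T \ B) hT'
    have hkI : k ∉ I := fun h =>
      (Finset.mem_sdiff.1 (hIsub h)).2 (Finset.mem_insert_self _ _)
    refine ⟨insert k I, ?_, ?_, ?_⟩
    · intro x hx
      rcases Finset.mem_insert.1 hx with rfl | hx
      · exact hk
      · exact (Finset.mem_sdiff.1 (hIsub hx)).1
    · rw [Finset.card_insert_of_notMem hkI, hIcard]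
    · intro a ha b hb
      rcases Finset.mem_insert.1 ha with ha' | ha' <;>
        rcases Finset.mem_insert.1 hb with hb' | hb'
      · rw [ha', hb']
        exact Nat.ne_of_lt (hFS k)
      · rw [ha']
        have hbB := (Finset.mem_sdiff.1 (hIsub hb')).2
        intro h
        exact hbB (Finset.mem_insert_of_mem
          (Finset.mem_filter.2 ⟨Finset.mem_univ _, Or.inr h.symm⟩))
      · rw [hb']
        have haB := (Finset.mem_sdiff.1 (hIsub ha')).2
        intro h
        exact haB (Finset.mem_insert_of_mem
          (Finset.mem_filter.2 ⟨Finset.mem_univ _, Or.inl h⟩))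
      · exact hind a ha' b hb'

/-- Among `q*(2q-1)` pairs `(F k, S k)` with `F k < S k` one can find `q` of them
such that no first coordinate equals a second coordinate. -/
lemma exists_good_subset (q : ℕ) (hq : 2 ≤ q) (F S : Fin (q * (2 * q - 1)) → ℕ)
    (hFS : ∀ k, F k < S k) :
    ∃ I : Finset (Fin (q * (2 * q - 1))), I.card = q ∧ ∀ k ∈ I, ∀ l ∈ I, F k ≠ S l := by
  classical
  by_cases h1 : ∃ v, q ≤ (Finset.univ.filter (fun k => F k = v)).card
  · obtain ⟨v, hv⟩ := h1
    obtain ⟨I, hIsub, hIcard⟩ := Finset.exists_subset_card_eq hv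
    refine ⟨I, hIcard, fun k hk l hl => ?_⟩
    have hk' := (Finset.mem_filter.1 (hIsub hk)).2
    have hl' := (Finset.mem_filter.1 (hIsub hl)).2
    have := hFS l
    omega
  by_cases h2 : ∃ v, q ≤ (Finset.univ.filter (fun k => S k = v)).card
  · obtain ⟨v, hv⟩ := h2
    obtain ⟨I, hIsub, hIcard⟩ := Finset.exists_subset_card_eq hv
    refine ⟨I, hIcard, fun k hk l hl => ?_⟩
    have hk' := (Finset.mem_filter.1 (hIsub hk)).2
    have hl' := (Finset.mem_filter.1 (hIsub hl)).2
    have := hFS k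
    omega
  push_neg at h1 h2
  have hdeg : ∀ k, (Finset.univ.filter
      (fun l => F l = S k ∨ S l = F k)).card ≤ 2 * q - 2 := by
    intro k
    have hsub : Finset.univ.filter (fun l => F l = S k ∨ S l = F k) ⊆
        Finset.univ.filter (fun l => F l = S k) ∪
          Finset.univ.filter (fun l => S l = F k) := by
      intro x hx
      rcases (Finset.mem_filter.1 hx).2 with h | h
      · exact Finset.mem_union_left _ (Finset.mem_filter.2 ⟨Finset.mem_univ _, h⟩)
      · exact Finset.mem_union_right _ (Finset.mem_filter.2 ⟨Finset.mem_univ _, h⟩)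
    have := Finset.card_le_card hsub
    have := Finset.card_union_le (Finset.univ.filter (fun l => F l = S k))
      (Finset.univ.filter (fun l => S l = F k))
    have := h1 (S k)
    have := h2 (F k)
    omega
  obtain ⟨I, _, hIcard, hind⟩ :=
    greedy_indep F S hFS (2 * q - 2) hdeg q Finset.univ (by
      have : (2 * q - 2) + 1 = 2 * q - 1 := by omega
      rw [this, Finset.card_univ, Fintype.card_fin])
  exact ⟨I, hIcard, hind⟩

/-- (IP implies not pierceable.) Let `E ⊆ X × Y` be a relation such that for every `m`
there is a set `S ⊆ Y` of size `m` dually shattered by `E`. Then for every `q ≥ 2` there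
exists `p ≥ q` such that for every `N` there is a finite family of sets of the form
`D(b₁, b₂) = {x : (x,b₁) ∈ E ∧ (x,b₂) ∉ E}` with `b₁ ≠ b₂` which satisfies the
`(p, q)`-property but admits no transversal of size at most `N`. -/
theorem ip_not_pierceable {X Y : Type*} (E : Set (X × Y))
    (hIP : ∀ m : ℕ, ∃ S : Finset Y, S.card = m ∧
      ∀ S' ⊆ S, ∃ e : X, ∀ c ∈ S, ((e, c) ∈ E ↔ c ∈ S')) :
    ∀ q : ℕ, 2 ≤ q → ∃ p : ℕ, q ≤ p ∧
      ∀ N : ℕ, ∃ (n : ℕ) (b : Fin n → Y × Y),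
        (∀ i, (b i).1 ≠ (b i).2) ∧
        (∀ g : Fin p → Fin n, ∃ I : Finset (Fin p), I.card = q ∧
          (⋂ i ∈ I, Dset E (b (g i)).1 (b (g i)).2).Nonempty) ∧
        (∀ A : Finset X, A.card ≤ N →
          ∃ i : Fin n, ∀ a ∈ A, a ∉ Dset E (b i).1 (b i).2) := by
  classical
  intro q hq
  refine ⟨q * (2 * q - 1), Nat.le_mul_of_pos_right q (by omega), ?_⟩
  intro N
  obtain ⟨Sfin, hScard, hShat⟩ := hIP (2 ^ N + 1)
  set m := Sfin.card with hmdef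
  have hm2 : 2 ≤ m := by
    have : 1 ≤ 2 ^ N := Nat.one_le_two_pow
    omega
  -- enumeration of the shattered set
  set c : Fin m → Y := fun i => (Sfin.equivFin.symm i : Y) with hcdef
  have hcmem : ∀ i, c i ∈ Sfin := fun i => (Sfin.equivFin.symm i).2
  have hcinj : Function.Injective c := fun i j h =>
    Sfin.equivFin.symm.injective (Subtype.coe_injective h)
  -- encoding of pairs
  set pr : Fin (m * m) → Fin m × Fin m := fun k =>
    if (finProdFinEquiv.symm k).1 < (finProdFinEquiv.symm k).2 then finProdFinEquiv.symm k
    else if (finProdFinEquiv.symm k).2 < (finProdFinEquiv.symm k).1 then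
      ((finProdFinEquiv.symm k).2, (finProdFinEquiv.symm k).1)
    else (⟨0, by omega⟩, ⟨1, by omega⟩) with hprdef
  have hpr1 : ∀ k, (pr k).1 < (pr k).2 := by
    intro k
    rw [hprdef]
    dsimp only
    split_ifs with h h2
    · exact h
    · exact h2
    · exact Fin.mk_lt_mk.2 one_pos
  have hpr2 : ∀ i j : Fin m, i < j → pr (finProdFinEquiv (i, j)) = (i, j) := by
    intro i j hij
    rw [hprdef]
    dsimp only
    rw [Equiv.symm_apply_apply]
    exact if_pos hij
  refine ⟨m * m, fun k => (c (pr k).1, c (pr k).2), ?_, ?_, ?_⟩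
  · intro i h
    exact absurd (hcinj h) (ne_of_lt (hpr1 i))
  · -- (p, q)-property
    intro g
    obtain ⟨I, hIcard, hind⟩ := exists_good_subset q hq
      (fun k => ((pr (g k)).1 : ℕ)) (fun k => ((pr (g k)).2 : ℕ))
      (fun k => hpr1 (g k))
    refine ⟨I, hIcard, ?_⟩
    have hS'sub : I.image (fun k => c (pr (g k)).1) ⊆ Sfin := by
      intro y hy
      obtain ⟨k, _, rfl⟩ := Finset.mem_image.1 hy
      exact hcmem _
    obtain ⟨e, he⟩ := hShat _ hS'sub
    refine ⟨e, Set.mem_iInter₂.2 fun k hk => ?_⟩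
    constructor
    · exact (he _ (hcmem _)).2 (Finset.mem_image.2 ⟨k, hk, rfl⟩)
    · intro hE
      obtain ⟨l, hl, hceq⟩ := Finset.mem_image.1 ((he _ (hcmem _)).1 hE)
      have : ((pr (g l)).1 : ℕ) = ((pr (g k)).2 : ℕ) :=
        congrArg Fin.val (hcinj hceq)
      exact hind l hl k hk this
  · -- no small transversal
    intro A hA
    set f : Fin m → Finset X := fun i => A.filter (fun a => (a, c i) ∈ E) with hfdef
    have hmaps : ∀ i ∈ (Finset.univ : Finset (Fin m)), f i ∈ A.powerset :=
      fun i _ => Finset.mem_powerset.2 (Finset.filter_subset _ _)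
    have hcardlt : A.powerset.card < (Finset.univ : Finset (Fin m)).card := by
      rw [Finset.card_powerset, Finset.card_univ, Fintype.card_fin]
      have h1 : 2 ^ A.card ≤ 2 ^ N := Nat.pow_le_pow_right (by omega) hA
      omega
    obtain ⟨i, _, j, _, hij, hfij⟩ :=
      Finset.exists_ne_map_eq_of_card_lt_of_maps_to hcardlt hmaps
    have key : ∀ i j : Fin m, i < j → f i = f j →
        ∃ k : Fin (m * m), ∀ a ∈ A, a ∉ Dset E (c (pr k).1) (c (pr k).2) := by
      intro i j hlt hfeq
      refine ⟨finProdFinEquiv (i, j), ?_⟩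
      rw [hpr2 i j hlt]
      intro a ha hmem
      have h1 : a ∈ f i := Finset.mem_filter.2 ⟨ha, hmem.1⟩
      rw [hfeq] at h1
      exact hmem.2 (Finset.mem_filter.1 h1).2
    rcases hij.lt_or_gt with hlt | hlt
    · exact key i j hlt hfij
    · exact key j i hlt hfij.symm
end

section
/- There exists a family (B_{i,j})_{i,j∈ℕ} of convex subsets of ℝ² such that, writing D for the closed unit disk in ℝ² and setting F_{i,j} := D ∖ B_{i,j}, the following hold: (a) for every i ∈ ℕ and all j ≠ j' ∈ ℕ, F_{i,j} ∩ F_{i,j'} = ∅; and (b) for every function f : ℕ → ℕ and every n ∈ ℕ, ⋂_{i<n} F_{i,f(i)} ≠ ∅. -/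
open Metric

noncomputable section

/-- A point on the unit circle, via rational parametrization. -/
def circPt (t : ℕ) : EuclideanSpace ℝ (Fin 2) :=
  (WithLp.equiv 2 (Fin 2 → ℝ)).symm
    ![(1 - (t : ℝ)^2) / (1 + (t : ℝ)^2), 2 * (t : ℝ) / (1 + (t : ℝ)^2)]

lemma one_add_sq_pos (t : ℕ) : (0:ℝ) < 1 + (t:ℝ)^2 := by positivity

lemma circPt_norm (t : ℕ) : ‖circPt t‖ = 1 := by
  have h := (one_add_sq_pos t).ne'
  rw [EuclideanSpace.norm_eq]
  rw [Fin.sum_univ_two]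
  simp only [circPt, WithLp.equiv_symm_apply, PiLp.toLp_apply, Matrix.cons_val_zero, Matrix.cons_val_one,
    Matrix.head_cons, Real.norm_eq_abs, sq_abs]
  rw [show ((1 - (t : ℝ)^2) / (1 + (t : ℝ)^2))^2 + (2 * (t : ℝ) / (1 + (t : ℝ)^2))^2 = 1 by
    field_simp; ring]
  exact Real.sqrt_one

lemma circPt_injective : Function.Injective circPt := by
  intro m n h
  have h0 := congrArg (fun x => (WithLp.equiv 2 (Fin 2 → ℝ)) x 0) h
  have h1 := congrArg (fun x => (WithLp.equiv 2 (Fin 2 → ℝ)) x 1) h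
  simp only [circPt, Equiv.apply_symm_apply, Matrix.cons_val_zero, Matrix.cons_val_one,
    Matrix.head_cons] at h0 h1
  have hm := (one_add_sq_pos m).ne'
  have hn := (one_add_sq_pos n).ne'
  have hsq : ((m:ℝ))^2 = ((n:ℝ))^2 := by
    field_simp at h0
    nlinarith [h0]
  have hsqn : m ^ 2 = n ^ 2 := by exact_mod_cast hsq
  exact Nat.pow_left_injective (by norm_num) hsqn

/-- digit `i` of code `c`. -/
def digit (c i : ℕ) : ℕ := (Denumerable.ofNat (List ℕ) c).getD i 0

def Fset (i j : ℕ) : Set (EuclideanSpace ℝ (Fin 2)) :=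
  { x | ∃ c, digit c i = j ∧ circPt c = x }

lemma Fset_subset_sphere (i j : ℕ) : Fset i j ⊆ sphere (0 : EuclideanSpace ℝ (Fin 2)) 1 := by
  rintro x ⟨c, -, rfl⟩
  simp [mem_sphere_iff_norm, circPt_norm]

lemma diff_sphere_convex {F : Set (EuclideanSpace ℝ (Fin 2))}
    (hF : F ⊆ sphere (0 : EuclideanSpace ℝ (Fin 2)) 1) :
    Convex ℝ (closedBall (0 : EuclideanSpace ℝ (Fin 2)) 1 \ F) := by
  intro x hx y hy a b ha hb hab
  by_cases hxy : x = y
  · subst hxy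
    rw [show a • x + b • x = x by rw [← add_smul, hab, one_smul]]
    exact hx
  rcases eq_or_lt_of_le ha with ha0 | ha0
  · rw [← ha0] at hab ⊢
    simp only [zero_smul, zero_add] at hab ⊢
    rw [hab, one_smul]; exact hy
  rcases eq_or_lt_of_le hb with hb0 | hb0
  · rw [← hb0] at hab ⊢
    simp only [zero_smul, add_zero] at hab ⊢
    rw [hab, one_smul]; exact hx
  have hmem : a • x + b • y ∈ ball (0 : EuclideanSpace ℝ (Fin 2)) 1 := by
    have := (strictConvex_closedBall ℝ (0 : EuclideanSpace ℝ (Fin 2)) 1) hx.1 hy.1 hxy ha0 hb0 hab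
    rwa [interior_closedBall (0 : EuclideanSpace ℝ (Fin 2)) one_ne_zero] at this
  constructor
  · exact ball_subset_closedBall hmem
  · intro hFmem
    have := hF hFmem
    rw [mem_sphere_iff_norm] at this
    rw [mem_ball_iff_norm] at hmem
    simp only [sub_zero] at this hmem
    linarith

/-- There exists a family `(B_{i,j})_{i,j∈ℕ}` of convex subsets of `ℝ²` such that, writing
`D` for the closed unit disk and `F_{i,j} := D ∖ B_{i,j}`: (a) for every `i` and all
`j ≠ j'`, `F_{i,j} ∩ F_{i,j'} = ∅`; and (b) for every `f : ℕ → ℕ` and every `n`,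
`⋂_{i<n} F_{i,f(i)} ≠ ∅`. (This witnesses `2-TP₂` for differences of convex sets.) -/
theorem convex_differences_tp2 :
    ∃ B : ℕ → ℕ → Set (EuclideanSpace ℝ (Fin 2)),
      (∀ i j, Convex ℝ (B i j)) ∧
      (∀ i : ℕ, ∀ j j' : ℕ, j ≠ j' →
        (Metric.closedBall (0 : EuclideanSpace ℝ (Fin 2)) 1 \ B i j) ∩
          (Metric.closedBall (0 : EuclideanSpace ℝ (Fin 2)) 1 \ B i j') = ∅) ∧
      (∀ f : ℕ → ℕ, ∀ n : ℕ,
        (⋂ i ∈ Finset.range n,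
          (Metric.closedBall (0 : EuclideanSpace ℝ (Fin 2)) 1 \ B i (f i))).Nonempty) := by
  refine ⟨fun i j => closedBall (0 : EuclideanSpace ℝ (Fin 2)) 1 \ Fset i j, ?_, ?_, ?_⟩
  · intro i j; exact diff_sphere_convex (Fset_subset_sphere i j)
  all_goals {
    have key : ∀ i j, closedBall (0 : EuclideanSpace ℝ (Fin 2)) 1 \
        (closedBall (0 : EuclideanSpace ℝ (Fin 2)) 1 \ Fset i j) = Fset i j := by
      intro i j
      rw [Set.diff_diff_right, Set.diff_self, Set.empty_union]
      exact Set.inter_eq_self_of_subset_right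
        ((Fset_subset_sphere i j).trans sphere_subset_closedBall)
    first
    | { intro i j j' hjj'
        rw [key, key]
        ext x
        simp only [Set.mem_inter_iff, Set.mem_empty_iff_false, iff_false, not_and]
        rintro ⟨c, hc, rfl⟩ ⟨c', hc', hcc'⟩
        exact hjj' (hc ▸ hc' ▸ congrArg (fun d => digit d i) (circPt_injective hcc').symm ▸ rfl) }
    | { intro f n
        refine ⟨circPt (Encodable.encode (List.ofFn fun i : Fin n => f i)), ?_⟩
        simp only [Set.mem_iInter, key, Finset.mem_range]
        intro i hi
        refine ⟨_, ?_, rfl⟩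
        unfold digit
        rw [Denumerable.ofNat_encode]
        rw [List.getD_eq_getElem _ _ (by simpa using hi)]
        simp }
  }

end
end

section
/- Let d ≥ 2 and k ≥ d be integers. There exists L ∈ ℕ (depending only on k and d) such that for every l ≥ L the following holds. Let X be a set, A a set with |A| = l, and (S_a)_{a∈A} a family of subsets of X. Call a set P ⊆ A with 1 ≤ |P| ≤ k consistent if ⋂_{a∈P} S_a ≠ ∅, and call two sets P, Q ⊆ A 1-inconsistent if there exist a ∈ P and b ∈ Q with S_a ∩ S_b = ∅. Suppose 𝒮 is a collection of consistent subsets of A, each of size at most k, which are pairwise 1-inconsistent, and |𝒮| > 2 · l^{k − 1/d^{d−1}} (real exponent). Then there exist elements a_{i,j} ∈ A for i, j ∈ {1,…,d} such that: for each i, the sets S_{a_{i,1}}, …, S_{a_{i,d}} are pairwise disjoint; and for every function f : {1,…,d} → {1,…,d}, ⋂_{i=1}^{d} S_{a_{i,f(i)}} ≠ ∅. -/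
open Finset

universe u v

section Box

variable {V : Type u} [DecidableEq V]

/-- A complete `r`-partite sub-hypergraph with all parts of size `t`:
there are pairwise disjoint sets `W i` of size `t` such that every transversal is an edge. -/
def HasBox (E : Finset (Finset V)) (r t : ℕ) : Prop :=
  ∃ W : Fin r → Finset V, (∀ i, (W i).card = t) ∧
    (∀ i j, i ≠ j → Disjoint (W i) (W j)) ∧
    ∀ w : Fin r → V, (∀ i, w i ∈ W i) → Finset.image w Finset.univ ∈ E

lemma sub_pow_le_descFactorial (a : ℕ) : ∀ t : ℕ, (a - t) ^ t ≤ a.descFactorial t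
  | 0 => le_refl _
  | (t + 1) => by
    rw [Nat.descFactorial_succ, pow_succ]
    have h2 : a - (t + 1) ≤ a - t := Nat.sub_le_sub_left (Nat.le_succ t) a
    have h1 : (a - (t + 1)) ^ t ≤ a.descFactorial t :=
      le_trans (Nat.pow_le_pow_left h2 t) (sub_pow_le_descFactorial a t)
    calc (a - (t + 1)) ^ t * (a - (t + 1)) ≤ a.descFactorial t * (a - t) :=
          Nat.mul_le_mul h1 h2
      _ = (a - t) * a.descFactorial t := mul_comm _ _

variable [Fintype V]

/-- The degree of an `r`-set `f`: the number of vertices `v` with `insert v f` an edge. -/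
def hdeg (E : Finset (Finset V)) (f : Finset V) : ℕ :=
  (Finset.univ.filter fun v => v ∉ f ∧ insert v f ∈ E).card

/-- The link of a `t`-set `T`: the `r`-sets `f` with `insert v f ∈ E` for every `v ∈ T`. -/
def hlink (E : Finset (Finset V)) (r : ℕ) (T : Finset V) : Finset (Finset V) :=
  (Finset.univ.powersetCard r).filter fun f => ∀ v ∈ T, v ∉ f ∧ insert v f ∈ E

lemma sum_deg_ge (E : Finset (Finset V)) (r : ℕ) (hE : ∀ e ∈ E, e.card = r + 1) :
    (r + 1) * E.card ≤ ∑ f ∈ Finset.univ.powersetCard r, hdeg E f := by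
  have h1 : (E.sigma fun e => e).card = (r + 1) * E.card := by
    rw [Finset.card_sigma, Finset.sum_congr rfl hE, Finset.sum_const, smul_eq_mul, mul_comm]
  have h2 : ((Finset.univ.powersetCard r).sigma
      fun f => Finset.univ.filter fun v => v ∉ f ∧ insert v f ∈ E).card
      = ∑ f ∈ Finset.univ.powersetCard r, hdeg E f :=
    Finset.card_sigma _ _
  rw [← h1, ← h2]
  apply Finset.card_le_card_of_injOn (fun p => ⟨p.1.erase p.2, p.2⟩)
  · rintro ⟨e, x⟩ hp
    rw [Finset.mem_coe, Finset.mem_sigma] at hp ⊢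
    obtain ⟨he, hx⟩ := hp
    refine ⟨?_, ?_⟩
    · rw [Finset.mem_powersetCard]
      refine ⟨Finset.subset_univ _, ?_⟩
      rw [Finset.card_erase_of_mem hx, hE e he]
      omega
    · simp only [Finset.mem_filter, Finset.mem_univ, true_and]
      exact ⟨Finset.notMem_erase _ _, by rw [Finset.insert_erase hx]; exact he⟩
  · rintro ⟨e, x⟩ hp ⟨e', x'⟩ hp' h
    simp only [Sigma.mk.inj_iff, heq_eq_eq] at h
    obtain ⟨h1', h2'⟩ := h
    rw [Finset.mem_coe, Finset.mem_sigma] at hp hp'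
    subst h2'
    have hxe : x ∈ e := hp.2
    have hxe' : x ∈ e' := hp'.2
    have he : e = e' := by
      rw [← Finset.insert_erase hxe, ← Finset.insert_erase hxe', h1']
    simp [he]

lemma sum_choose_eq (E : Finset (Finset V)) (r t : ℕ) :
    ∑ f ∈ Finset.univ.powersetCard r, (hdeg E f).choose t
    = ∑ T ∈ Finset.univ.powersetCard t, (hlink E r T).card := by
  have key : ∀ f : Finset V, (hdeg E f).choose t
      = ((Finset.univ.powersetCard t).filter fun T => ∀ v ∈ T, v ∉ f ∧ insert v f ∈ E).card := by
    intro f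
    rw [hdeg, ← Finset.card_powersetCard]
    congr 1
    ext T
    simp only [Finset.mem_powersetCard, Finset.mem_filter, Finset.subset_univ, true_and,
      Finset.subset_iff, Finset.mem_filter, Finset.mem_univ]
    tauto
  unfold hlink
  simp_rw [key, Finset.card_filter]
  exact Finset.sum_comm

end Box


section Box2
variable {V : Type u} [DecidableEq V] [Fintype V]

lemma hasBox_of_link (E : Finset (Finset V)) (r t : ℕ) (ht : 1 ≤ t)
    (T : Finset V) (hT : T.card = t)
    (hbox : HasBox (hlink E (r + 1) T) (r + 1) t) :
    HasBox E (r + 2) t := by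
  obtain ⟨W, hWc, hWd, hWt⟩ := hbox
  have hWne : ∀ i, (W i).Nonempty := fun i => Finset.card_pos.mp (by rw [hWc i]; omega)
  have hWT : ∀ i, ∀ x ∈ W i, x ∉ T := by
    intro i x hx hxT
    have hwmem : ∀ j, (fun j => if j = i then x else (hWne j).choose) j ∈ W j := by
      intro j
      by_cases hj : j = i
      · subst hj; simp only [if_pos rfl]; exact hx
      · simp only [if_neg hj]; exact (hWne j).choose_spec
    have hmem := hWt _ hwmem
    rw [hlink, Finset.mem_filter] at hmem
    refine (hmem.2 x hxT).1 ?_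
    exact Finset.mem_image.mpr ⟨i, Finset.mem_univ i, by simp⟩
  have hdisjWT : ∀ i, Disjoint (W i) T :=
    fun i => Finset.disjoint_left.mpr fun x hx => hWT i x hx
  refine ⟨Fin.snoc W T, ?_, ?_, ?_⟩
  · intro i
    induction i using Fin.lastCases with
    | last => simp [Fin.snoc_last, hT]
    | cast j => simp [Fin.snoc_castSucc, hWc j]
  · intro i j hij
    induction i using Fin.lastCases with
    | last =>
      induction j using Fin.lastCases with
      | last => exact absurd rfl hij
      | cast j => simpa [Fin.snoc_last, Fin.snoc_castSucc] using (hdisjWT j).symm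
    | cast i =>
      induction j using Fin.lastCases with
      | last => simpa [Fin.snoc_last, Fin.snoc_castSucc] using hdisjWT i
      | cast j =>
        have hij' : i ≠ j := fun h => hij (by rw [h])
        simpa [Fin.snoc_castSucc] using hWd i j hij'
  · intro w hw
    have hu : w (Fin.last (r + 1)) ∈ T := by
      have := hw (Fin.last (r + 1))
      rwa [Fin.snoc_last] at this
    have hmemL := hWt (fun j => w j.castSucc) (fun j => by
      have := hw j.castSucc
      rwa [Fin.snoc_castSucc] at this)
    rw [hlink, Finset.mem_filter] at hmemL
    have hins := (hmemL.2 _ hu).2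
    have himg : Finset.image w Finset.univ
        = insert (w (Fin.last (r + 1)))
            (Finset.image (fun j : Fin (r + 1) => w j.castSucc) Finset.univ) := by
      ext x
      simp only [Finset.mem_image, Finset.mem_insert, Finset.mem_univ, true_and]
      constructor
      · rintro ⟨i, rfl⟩
        induction i using Fin.lastCases with
        | last => exact Or.inl rfl
        | cast i => exact Or.inr ⟨i, rfl⟩
      · rintro (rfl | ⟨i, rfl⟩)
        · exact ⟨Fin.last (r + 1), rfl⟩
        · exact ⟨i.castSucc, rfl⟩
    rw [himg]
    exact hins

end Box2

section Erdos
variable {V : Type u}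


/-- **Erdős's theorem** on hypergraphs without a complete `(r+1)`-partite sub-hypergraph:
an `(r+1)`-uniform hypergraph on `n ≥ n₀` vertices with no `K^{(r+1)}(t,…,t)` has at most
`C · n^{(r+1) - 1/t^r}` edges, with `C = t-1` for `r = 0` and `C = 3/2` otherwise. -/
theorem erdos_box (t : ℕ) (ht : 2 ≤ t) (r : ℕ) :
    ∃ n₀ : ℕ, ∀ (V : Type u) [Fintype V] [DecidableEq V] (E : Finset (Finset V)),
      n₀ ≤ Fintype.card V → (∀ e ∈ E, e.card = r + 1) → ¬ HasBox E (r + 1) t →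
      (E.card : ℝ) ≤ (if r = 0 then (t : ℝ) - 1 else 3 / 2) *
        (Fintype.card V : ℝ) ^ ((r + 1 : ℝ) - 1 / (t : ℝ) ^ r) := by
  induction r with
  | zero =>
    refine ⟨1, ?_⟩
    intro V _ _ E hn hunif hnobox
    simp only [Nat.reduceAdd] at hunif hnobox
    have hE : E.card ≤ t - 1 := by
      by_contra hcon
      push_neg at hcon
      have htE : t ≤ E.card := by omega
      obtain ⟨E', hE'sub, hE'card⟩ := Finset.exists_subset_card_eq htE
      apply hnobox
      refine ⟨fun _ => E'.biUnion id, ?_, ?_, ?_⟩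
      · intro i
        rw [Finset.card_biUnion]
        · simp only [id_eq]
          rw [Finset.sum_congr rfl fun e he => hunif e (hE'sub he), Finset.sum_const,
            hE'card, smul_eq_mul, mul_one]
        · intro x hx y hy hxy
          obtain ⟨a, rfl⟩ := Finset.card_eq_one.mp (hunif x (hE'sub hx))
          obtain ⟨b, rfl⟩ := Finset.card_eq_one.mp (hunif y (hE'sub hy))
          simp only [Function.onFun, id_eq, Finset.disjoint_singleton]
          intro hab
          exact hxy (by rw [hab])
      · intro i j hij
        exact absurd (Subsingleton.elim i j) hij
      · intro w hw
        have h0 := hw 0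
        simp only [Finset.mem_biUnion, id] at h0
        obtain ⟨e, he, hwe⟩ := h0
        obtain ⟨a, rfl⟩ := Finset.card_eq_one.mp (hunif e (hE'sub he))
        have hwa : w 0 = a := Finset.mem_singleton.mp hwe
        have himg : Finset.image w Finset.univ = {w 0} := by
          rw [Finset.univ_unique, Finset.image_singleton, Fin.default_eq_zero]
        rw [himg, hwa]
        exact hE'sub he
    have h2 : (E.card : ℝ) ≤ (t : ℝ) - 1 := by
      have h3 : ((E.card : ℕ) : ℝ) ≤ ((t - 1 : ℕ) : ℝ) := Nat.cast_le.mpr hE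
      rwa [Nat.cast_sub (by omega : 1 ≤ t), Nat.cast_one] at h3
    rw [if_pos rfl]
    have hexp : ((0 : ℕ) + 1 : ℝ) - 1 / (t : ℝ) ^ (0 : ℕ) = 0 := by norm_num
    rw [hexp, Real.rpow_zero, mul_one]
    exact h2
  | succ r ih =>
    obtain ⟨n₁, hn₁⟩ := ih
    refine ⟨max (max n₁ (t * t)) (r + 2), ?_⟩
    intro V _ _ E hn hunif hnobox
    by_contra hcon
    push_neg at hcon
    rw [if_neg (by omega : ¬ r + 1 = 0)] at hcon
    set n := Fintype.card V with hn_def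
    have hnn₁ : n₁ ≤ n := le_trans (le_trans (le_max_left _ _) (le_max_left _ _)) hn
    have hntt : t * t ≤ n := le_trans (le_trans (le_max_right _ _) (le_max_left _ _)) hn
    have hnr2 : r + 2 ≤ n := le_trans (le_max_right _ _) hn
    have hn1 : 1 ≤ n := by nlinarith
    set nr : ℝ := (n : ℝ) with hnr_def
    have hnr1 : (1 : ℝ) ≤ nr := by rw [hnr_def]; exact_mod_cast hn1
    have hnr0 : (0 : ℝ) < nr := lt_of_lt_of_le one_pos hnr1
    have ht0 : (0 : ℝ) < (t : ℝ) := by positivity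
    have ht2 : (2 : ℝ) ≤ (t : ℝ) := by exact_mod_cast ht
    set α : ℝ := ((r : ℕ) + 1 + 1 : ℝ) - 1 / (t : ℝ) ^ (r + 1) with hα
    set β : ℝ := ((r : ℕ) + 1 : ℝ) - 1 / (t : ℝ) ^ r with hβ
    have hcon' : 3 / 2 * nr ^ α < (E.card : ℝ) := by
      convert hcon using 3
      · rfl
      push_cast
      ring
    set Pr := (Finset.univ (α := V)).powersetCard (r + 1) with hPr
    -- the link bound coming from the induction hypothesis
    have hlinkbd : ∀ T ∈ (Finset.univ (α := V)).powersetCard t,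
        ((hlink E (r + 1) T).card : ℝ) ≤ (t : ℝ) * nr ^ β := by
      intro T hT
      have hTcard : T.card = t := (Finset.mem_powersetCard.mp hT).2
      have hnoboxL : ¬ HasBox (hlink E (r + 1) T) (r + 1) t := fun hb =>
        hnobox (hasBox_of_link E r t (by omega) T hTcard hb)
      have hunifL : ∀ f ∈ hlink E (r + 1) T, f.card = r + 1 := fun f hf =>
        (Finset.mem_powersetCard.mp (Finset.mem_filter.mp hf).1).2
      have hIH := hn₁ V (hlink E (r + 1) T) hnn₁ hunifL hnoboxL
      calc ((hlink E (r + 1) T).card : ℝ)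
          ≤ (if r = 0 then (t : ℝ) - 1 else 3 / 2) * nr ^ β := hIH
        _ ≤ (t : ℝ) * nr ^ β := by
            apply mul_le_mul_of_nonneg_right _ (Real.rpow_nonneg hnr0.le β)
            split <;> linarith
    -- the key counting chain, natural number part
    have hkey_nat : ∑ f ∈ Pr, (hdeg E f - t) ^ t
        ≤ t.factorial * ∑ T ∈ Finset.univ.powersetCard t, (hlink E (r + 1) T).card := by
      calc ∑ f ∈ Pr, (hdeg E f - t) ^ t
          ≤ ∑ f ∈ Pr, (hdeg E f).descFactorial t :=
            Finset.sum_le_sum fun f _ => sub_pow_le_descFactorial (hdeg E f) t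
        _ = ∑ f ∈ Pr, t.factorial * (hdeg E f).choose t :=
            Finset.sum_congr rfl fun f _ => Nat.descFactorial_eq_factorial_mul_choose _ _
        _ = t.factorial * ∑ f ∈ Pr, (hdeg E f).choose t := by rw [Finset.mul_sum]
        _ = _ := by rw [hPr, sum_choose_eq E (r + 1) t]
    -- upper bound in ℝ
    have hPt : ((Finset.univ (α := V)).powersetCard t).card = n.choose t := by
      rw [Finset.card_powersetCard, Finset.card_univ]
    have hupper : (∑ f ∈ Pr, ((hdeg E f - t : ℕ) : ℝ) ^ t) ≤ nr ^ (t : ℕ) * ((t : ℝ) * nr ^ β) := by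
      have c1 : (∑ f ∈ Pr, ((hdeg E f - t : ℕ) : ℝ) ^ t)
          = ((∑ f ∈ Pr, (hdeg E f - t) ^ t : ℕ) : ℝ) := by push_cast; rfl
      have c2 : ((t.factorial * ∑ T ∈ Finset.univ.powersetCard t, (hlink E (r + 1) T).card : ℕ) : ℝ)
          = (t.factorial : ℝ) * ∑ T ∈ Finset.univ.powersetCard t, ((hlink E (r + 1) T).card : ℝ) := by
        push_cast; rfl
      have c3 : ∑ T ∈ Finset.univ.powersetCard t, ((hlink E (r + 1) T).card : ℝ)
          ≤ (n.choose t : ℝ) * ((t : ℝ) * nr ^ β) := by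
        calc ∑ T ∈ Finset.univ.powersetCard t, ((hlink E (r + 1) T).card : ℝ)
            ≤ ∑ _T ∈ (Finset.univ (α := V)).powersetCard t, (t : ℝ) * nr ^ β :=
              Finset.sum_le_sum hlinkbd
          _ = (n.choose t : ℝ) * ((t : ℝ) * nr ^ β) := by
              rw [Finset.sum_const, hPt, nsmul_eq_mul]
      have c4 : (t.factorial : ℝ) * ((n.choose t : ℝ) * ((t : ℝ) * nr ^ β))
          ≤ nr ^ (t : ℕ) * ((t : ℝ) * nr ^ β) := by
        rw [← mul_assoc]
        apply mul_le_mul_of_nonneg_right _ (by positivity)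
        have c5 : t.factorial * n.choose t ≤ n ^ t := by
          rw [← Nat.descFactorial_eq_factorial_mul_choose]
          exact Nat.descFactorial_le_pow n t
        calc (t.factorial : ℝ) * (n.choose t : ℝ) = ((t.factorial * n.choose t : ℕ) : ℝ) := by
              push_cast; rfl
          _ ≤ ((n ^ t : ℕ) : ℝ) := Nat.cast_le.mpr c5
          _ = nr ^ (t : ℕ) := by push_cast; rfl
      calc (∑ f ∈ Pr, ((hdeg E f - t : ℕ) : ℝ) ^ t)
          = ((∑ f ∈ Pr, (hdeg E f - t) ^ t : ℕ) : ℝ) := c1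
        _ ≤ ((t.factorial * ∑ T ∈ Finset.univ.powersetCard t, (hlink E (r + 1) T).card : ℕ) : ℝ) :=
            Nat.cast_le.mpr hkey_nat
        _ = (t.factorial : ℝ) * ∑ T ∈ Finset.univ.powersetCard t, ((hlink E (r + 1) T).card : ℝ) := c2
        _ ≤ (t.factorial : ℝ) * ((n.choose t : ℝ) * ((t : ℝ) * nr ^ β)) := by
            apply mul_le_mul_of_nonneg_left c3 (by positivity)
        _ ≤ nr ^ (t : ℕ) * ((t : ℝ) * nr ^ β) := by
            rw [← mul_assoc] at c4 ⊢
            exact c4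
    -- lower bound on the plain sum
    have hcard_Pr : Pr.card = n.choose (r + 1) := by
      rw [hPr, Finset.card_powersetCard, Finset.card_univ]
    have hPrle : (Pr.card : ℝ) ≤ nr ^ ((r + 1 : ℕ) : ℝ) := by
      rw [hcard_Pr, Real.rpow_natCast]
      calc ((n.choose (r + 1) : ℕ) : ℝ) ≤ ((n ^ (r + 1) : ℕ) : ℝ) :=
            Nat.cast_le.mpr (Nat.choose_le_pow _ _)
        _ = nr ^ (r + 1 : ℕ) := by push_cast; rfl
    have hsplit : nr ^ α = nr ^ ((r + 1 : ℕ) : ℝ) * nr ^ ((1 : ℝ) - 1 / (t : ℝ) ^ (r + 1)) := by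
      rw [← Real.rpow_add hnr0, hα]
      congr 1
      push_cast
      ring
    have htp2 : (2 : ℝ) ≤ (t : ℝ) ^ (r + 1) :=
      le_trans ht2 (le_self_pow₀ (by linarith) (by omega))
    have hc1 : (t : ℝ) ≤ nr ^ ((1 : ℝ) - 1 / (t : ℝ) ^ (r + 1)) := by
      have e1 : (t : ℝ) ≤ nr ^ ((1 : ℝ) / 2) := by
        have e2 : ((t : ℝ) * t) ^ ((1 : ℝ) / 2) ≤ nr ^ ((1 : ℝ) / 2) :=
          Real.rpow_le_rpow (by positivity) (by rw [hnr_def]; exact_mod_cast hntt) (by norm_num)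
        have e3 : ((t : ℝ) * t) ^ ((1 : ℝ) / 2) = (t : ℝ) := by
          rw [show (t : ℝ) * t = (t : ℝ) ^ (2 : ℕ) by ring, ← Real.rpow_natCast ((t : ℝ)) 2,
            ← Real.rpow_mul ht0.le]
          norm_num
        rwa [e3] at e2
      refine le_trans e1 (Real.rpow_le_rpow_of_exponent_le hnr1 ?_)
      have : 1 / (t : ℝ) ^ (r + 1) ≤ 1 / 2 := by
        apply one_div_le_one_div_of_le <;> linarith
      linarith
    have htPr : (t : ℝ) * (Pr.card : ℝ) ≤ nr ^ α := by
      rw [hsplit]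
      calc (t : ℝ) * (Pr.card : ℝ)
          ≤ nr ^ ((1 : ℝ) - 1 / (t : ℝ) ^ (r + 1)) * (nr ^ ((r + 1 : ℕ) : ℝ)) :=
            mul_le_mul hc1 hPrle (by positivity) (Real.rpow_nonneg hnr0.le _)
        _ = _ := mul_comm _ _
    have hsumdeg : ((r + 2) * E.card : ℕ) ≤ ∑ f ∈ Pr, hdeg E f := by
      have := sum_deg_ge E (r + 1) hunif
      rwa [hPr]
    have hlow : 2 * nr ^ α ≤ ∑ f ∈ Pr, ((hdeg E f - t : ℕ) : ℝ) := by
      have h1 : ∀ f ∈ Pr, ((hdeg E f : ℝ)) - (t : ℝ) ≤ ((hdeg E f - t : ℕ) : ℝ) := by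
        intro f _
        rcases le_total t (hdeg E f) with h | h
        · rw [Nat.cast_sub h]
        · have h0 : hdeg E f - t = 0 := by omega
          rw [h0, Nat.cast_zero]
          have : (hdeg E f : ℝ) ≤ (t : ℝ) := Nat.cast_le.mpr h
          linarith
      have h2 : ∑ f ∈ Pr, ((hdeg E f : ℝ) - (t : ℝ)) ≤ ∑ f ∈ Pr, ((hdeg E f - t : ℕ) : ℝ) :=
        Finset.sum_le_sum h1
      have h3 : ∑ f ∈ Pr, ((hdeg E f : ℝ) - (t : ℝ))
          = ((∑ f ∈ Pr, hdeg E f : ℕ) : ℝ) - (t : ℝ) * (Pr.card : ℝ) := by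
        rw [Finset.sum_sub_distrib, Finset.sum_const, nsmul_eq_mul]
        push_cast
        ring
      have h4 : (3 : ℝ) * nr ^ α ≤ (((r + 2) * E.card : ℕ) : ℝ) := by
        push_cast
        have h5 : (0 : ℝ) ≤ (E.card : ℝ) := Nat.cast_nonneg _
        have h6 : (2 : ℝ) ≤ (r : ℝ) + 2 := by
          have : (0 : ℝ) ≤ (r : ℝ) := Nat.cast_nonneg r
          linarith
        nlinarith [hcon']
      have h7 : (((r + 2) * E.card : ℕ) : ℝ) ≤ ((∑ f ∈ Pr, hdeg E f : ℕ) : ℝ) :=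
        Nat.cast_le.mpr hsumdeg
      linarith
    -- power mean inequality
    have hPr_pos : 0 < Pr.card := by
      rw [hcard_Pr]
      exact Nat.choose_pos (by omega)
    have hpm : (∑ f ∈ Pr, ((hdeg E f - t : ℕ) : ℝ)) ^ t
        ≤ (Pr.card : ℝ) ^ (t - 1) * ∑ f ∈ Pr, ((hdeg E f - t : ℕ) : ℝ) ^ t := by
      have hj := pow_sum_div_card_le_sum_pow (s := Pr)
        (f := fun f => ((hdeg E f - t : ℕ) : ℝ)) (fun i _ => Nat.cast_nonneg _) (t - 1)
      rw [div_le_iff₀ (pow_pos (by exact_mod_cast hPr_pos) _)] at hj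
      have ht1 : t - 1 + 1 = t := by omega
      rw [ht1] at hj
      calc (∑ f ∈ Pr, ((hdeg E f - t : ℕ) : ℝ)) ^ t
          ≤ (∑ f ∈ Pr, ((hdeg E f - t : ℕ) : ℝ) ^ t) * (Pr.card : ℝ) ^ (t - 1) := hj
        _ = _ := mul_comm _ _
    -- assemble
    have hfinal : ((2 : ℝ) * nr ^ α) ^ t
        ≤ (nr ^ ((r + 1 : ℕ) : ℝ)) ^ (t - 1) * (nr ^ (t : ℕ) * ((t : ℝ) * nr ^ β)) := by
      calc ((2 : ℝ) * nr ^ α) ^ t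
          ≤ (∑ f ∈ Pr, ((hdeg E f - t : ℕ) : ℝ)) ^ t := by
            apply pow_le_pow_left₀ (mul_nonneg (by norm_num) (Real.rpow_nonneg hnr0.le _)) hlow
        _ ≤ (Pr.card : ℝ) ^ (t - 1) * ∑ f ∈ Pr, ((hdeg E f - t : ℕ) : ℝ) ^ t := hpm
        _ ≤ (nr ^ ((r + 1 : ℕ) : ℝ)) ^ (t - 1) * (nr ^ (t : ℕ) * ((t : ℝ) * nr ^ β)) := by
            have hnn : (0 : ℝ) ≤ (Pr.card : ℝ) := Nat.cast_nonneg _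
            have g1 := pow_le_pow_left₀ hnn hPrle (t - 1)
            have g3 : (0 : ℝ) ≤ (nr ^ ((r + 1 : ℕ) : ℝ)) ^ (t - 1) :=
              pow_nonneg (Real.rpow_nonneg hnr0.le _) _
            have g4 : (0 : ℝ) ≤ ∑ f ∈ Pr, ((hdeg E f - t : ℕ) : ℝ) ^ t :=
              Finset.sum_nonneg fun f _ => pow_nonneg (Nat.cast_nonneg _) _
            exact mul_le_mul g1 hupper g4 g3
    -- rewrite both sides as c * nr ^ e
    have hL : ((2 : ℝ) * nr ^ α) ^ t = (2 : ℝ) ^ t * nr ^ (α * (t : ℕ)) := by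
      rw [mul_pow, ← Real.rpow_natCast (nr ^ α) t, ← Real.rpow_mul hnr0.le]
    have hR : (nr ^ ((r + 1 : ℕ) : ℝ)) ^ (t - 1) * (nr ^ (t : ℕ) * ((t : ℝ) * nr ^ β))
        = (t : ℝ) * nr ^ (((r + 1 : ℕ) : ℝ) * ((t - 1 : ℕ) : ℝ) + (t : ℕ) + β) := by
      have e1 : nr ^ (((r + 1 : ℕ) : ℝ) * ((t - 1 : ℕ) : ℝ) + ((t : ℕ) : ℝ) + β)
          = nr ^ (((r + 1 : ℕ) : ℝ) * ((t - 1 : ℕ) : ℝ)) * nr ^ (((t : ℕ) : ℝ)) * nr ^ β := by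
        rw [← Real.rpow_add hnr0, ← Real.rpow_add hnr0]
      rw [e1, ← Real.rpow_natCast (nr ^ ((r + 1 : ℕ) : ℝ)) (t - 1), ← Real.rpow_mul hnr0.le,
        ← Real.rpow_natCast nr t]
      ring
    clear_value nr α β Pr
    have hexp_eq : α * (t : ℕ) = ((r + 1 : ℕ) : ℝ) * ((t - 1 : ℕ) : ℝ) + (t : ℕ) + β := by
      rw [hα, hβ, Nat.cast_sub (by omega : 1 ≤ t)]
      have hpow : (t : ℝ) ^ (r + 1) = (t : ℝ) ^ r * t := pow_succ _ _
      have htr0 : (t : ℝ) ^ r ≠ 0 := by positivity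
      push_cast
      rw [hpow]
      field_simp
      ring
    rw [hL, hexp_eq] at hfinal
    rw [hR] at hfinal
    have h2t : (2 : ℝ) ^ t ≤ (t : ℝ) := by
      have hpos : (0 : ℝ) < nr ^ (((r + 1 : ℕ) : ℝ) * ((t - 1 : ℕ) : ℝ) + (t : ℕ) + β) :=
        Real.rpow_pos_of_pos hnr0 _
      exact le_of_mul_le_mul_right (by linarith [hfinal]) hpos
    have hlt : (t : ℝ) < (2 : ℝ) ^ t := by
      have h := Nat.lt_two_pow_self (n := t)
      have h2 : ((t : ℕ) : ℝ) < ((2 ^ t : ℕ) : ℝ) := Nat.cast_lt.mpr h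
      push_cast at h2
      exact h2
    exact absurd h2t (not_le.mpr hlt)

end Erdos


section Grid

variable {X : Type v} {A : Type u}

/-- From a box in a pairwise `1`-inconsistent family of consistent sets we get a grid. -/
lemma grid_of_box [DecidableEq A] (S : A → Set X) (d : ℕ) (hd : 2 ≤ d)
    (E : Finset (Finset A))
    (hcons : ∀ e ∈ E, (⋂ a ∈ e, S a).Nonempty)
    (hinc : ∀ P ∈ E, ∀ Q ∈ E, P ≠ Q → ∃ a ∈ P, ∃ b ∈ Q, S a ∩ S b = ∅)
    (hbox : HasBox E d d) :
    ∃ a : Fin d → Fin d → A,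
      (∀ i : Fin d, ∀ j j' : Fin d, j ≠ j' → S (a i j) ∩ S (a i j') = ∅) ∧
      ∀ f : Fin d → Fin d, (⋂ i, S (a i (f i))).Nonempty := by
  obtain ⟨W, hWc, hWd, hWt⟩ := hbox
  have hpair : ∀ e ∈ E, ∀ u ∈ e, ∀ v ∈ e, ¬ S u ∩ S v = ∅ := by
    intro e he u hu v hv h0
    obtain ⟨z, hz⟩ := hcons e he
    rw [Set.mem_iInter₂] at hz
    have : z ∈ S u ∩ S v := ⟨hz u hu, hz v hv⟩
    rw [h0] at this
    exact this
  -- the enumeration of each part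
  have hcardW : ∀ i, Fintype.card {x // x ∈ W i} = d := fun i => by
    rw [Fintype.card_coe]; exact hWc i
  set a : Fin d → Fin d → A := fun i j => ((Fintype.equivFinOfCardEq (hcardW i)).symm j : A)
    with ha
  have hamem : ∀ i j, a i j ∈ W i := fun i j => ((Fintype.equivFinOfCardEq (hcardW i)).symm j).2
  have hainj : ∀ i, ∀ j j' : Fin d, a i j = a i j' → j = j' := by
    intro i j j' h
    have := Subtype.coe_injective (a₁ := (Fintype.equivFinOfCardEq (hcardW i)).symm j)
      (a₂ := (Fintype.equivFinOfCardEq (hcardW i)).symm j') h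
    exact (Fintype.equivFinOfCardEq (hcardW i)).symm.injective this
  have hiInter : ∀ w : Fin d → A, (⋂ b ∈ Finset.image w Finset.univ, S b) = ⋂ i, S (w i) := by
    intro w
    ext x
    simp only [Set.mem_iInter, Finset.mem_image, Finset.mem_univ, true_and]
    constructor
    · intro h i
      exact h (w i) ⟨i, rfl⟩
    · rintro h b ⟨i, rfl⟩
      exact h i
  refine ⟨a, ?_, ?_⟩
  · intro i j j' hjj'
    have hd0 : 0 < d := by omega
    set w : Fin d → A := fun i' => if i' = i then a i j else a i' ⟨0, hd0⟩ with hw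
    set w' : Fin d → A := fun i' => if i' = i then a i j' else a i' ⟨0, hd0⟩ with hw'
    have hwmem : ∀ i', w i' ∈ W i' := by
      intro i'
      by_cases h : i' = i
      · subst h; simp only [hw, if_pos rfl]; exact hamem _ _
      · simp only [hw, if_neg h]; exact hamem _ _
    have hwmem' : ∀ i', w' i' ∈ W i' := by
      intro i'
      by_cases h : i' = i
      · subst h; simp only [hw', if_pos rfl]; exact hamem _ _
      · simp only [hw', if_neg h]; exact hamem _ _
    have he : Finset.image w Finset.univ ∈ E := hWt w hwmem
    have he' : Finset.image w' Finset.univ ∈ E := hWt w' hwmem'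
    have haij_notin : a i j ∉ Finset.image w' Finset.univ := by
      intro hmem
      obtain ⟨i'', _, heq⟩ := Finset.mem_image.mp hmem
      by_cases h : i'' = i
      · simp only [hw', h, if_pos rfl] at heq
        exact hjj' (hainj i j' j heq).symm
      · simp only [hw', if_neg h] at heq
        have h1 : a i j ∈ W i'' := heq ▸ hamem i'' ⟨0, hd0⟩
        have h2 : a i j ∈ W i := hamem i j
        exact Finset.disjoint_left.mp (hWd i'' i h) h1 h2
    have hne : Finset.image w Finset.univ ≠ Finset.image w' Finset.univ := by
      intro h
      apply haij_notin
      rw [← h]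
      apply Finset.mem_image.mpr ⟨i, Finset.mem_univ i, by rw [hw]; simp⟩
    obtain ⟨u, hu, v, hv, huv⟩ := hinc _ he _ he' hne
    obtain ⟨iu, _, hiu⟩ := Finset.mem_image.mp hu
    obtain ⟨iv, _, hiv⟩ := Finset.mem_image.mp hv
    have hu_eq : u = a i j := by
      by_cases h : iu = i
      · subst h; rw [← hiu, hw]; simp
      · exfalso
        have : u ∈ Finset.image w' Finset.univ := by
          apply Finset.mem_image.mpr ⟨iu, Finset.mem_univ iu, ?_⟩
          rw [← hiu, hw, hw']
          simp [if_neg h]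
        exact hpair _ he' u this v hv huv
    have hv_eq : v = a i j' := by
      by_cases h : iv = i
      · subst h; rw [← hiv, hw']; simp
      · exfalso
        have : v ∈ Finset.image w Finset.univ := by
          apply Finset.mem_image.mpr ⟨iv, Finset.mem_univ iv, ?_⟩
          rw [← hiv, hw, hw']
          simp [if_neg h]
        exact hpair _ he u hu v this huv
    rw [← hu_eq, ← hv_eq]
    exact huv
  · intro f
    have he : Finset.image (fun i => a i (f i)) Finset.univ ∈ E :=
      hWt _ fun i => hamem i (f i)
    have := hcons _ he
    rwa [hiInter] at this

end Grid


section Count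

variable {X : Type v} {A : Type u}

lemma size_bound [Fintype A] [DecidableEq A] (S : A → Set X) (d : ℕ)
    (hd : 2 ≤ d) (hl1 : 1 ≤ Fintype.card A) (ε : ℝ) (hε0 : 0 ≤ ε) (hε1 : ε ≤ 1)
    (hE : ∀ E : Finset (Finset A),
      (∀ e ∈ E, e.card = d) → (∀ e ∈ E, (⋂ a ∈ e, S a).Nonempty) →
      (∀ P ∈ E, ∀ Q ∈ E, P ≠ Q → ∃ a ∈ P, ∃ b ∈ Q, S a ∩ S b = ∅) →
      (E.card : ℝ) ≤ 3 / 2 * (Fintype.card A : ℝ) ^ ((d : ℝ) - ε)) :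
    ∀ j : ℕ, ∀ 𝒯 : Finset (Finset A),
      (∀ P ∈ 𝒯, 1 ≤ P.card ∧ P.card ≤ d + j ∧ (⋂ a ∈ P, S a).Nonempty) →
      (∀ P ∈ 𝒯, ∀ Q ∈ 𝒯, P ≠ Q → ∃ a ∈ P, ∃ b ∈ Q, S a ∩ S b = ∅) →
      (𝒯.card : ℝ) ≤ 3 / 2 * (Fintype.card A : ℝ) ^ (((d + j : ℕ) : ℝ) - ε)
        + ((d + j : ℕ) : ℝ) * (Fintype.card A : ℝ) ^ (((d + j : ℕ) : ℝ) - 1) := by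
  have hl0 : (0 : ℝ) < (Fintype.card A : ℝ) := by exact_mod_cast hl1
  have hl1' : (1 : ℝ) ≤ (Fintype.card A : ℝ) := by exact_mod_cast hl1
  intro j
  induction j with
  | zero =>
    intro 𝒯 hmem hinc
    have hsplit := Finset.card_filter_add_card_filter_not
      (s := 𝒯) (p := fun P => P.card = d)
    have h₁ : ((𝒯.filter fun P => P.card = d).card : ℝ)
        ≤ 3 / 2 * (Fintype.card A : ℝ) ^ ((d : ℝ) - ε) := by
      apply hE
      · intro e he; exact (Finset.mem_filter.mp he).2
      · intro e he; exact (hmem e (Finset.mem_filter.mp he).1).2.2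
      · intro P hP Q hQ
        exact hinc P (Finset.mem_filter.mp hP).1 Q (Finset.mem_filter.mp hQ).1
    have h₂ : (𝒯.filter fun P => ¬ P.card = d).card ≤ (d - 1) * Fintype.card A ^ (d - 1) := by
      have hsub : (𝒯.filter fun P => ¬ P.card = d)
          ⊆ (Finset.Icc 1 (d - 1)).biUnion fun i => Finset.univ.powersetCard i := by
        intro P hP
        rw [Finset.mem_filter] at hP
        obtain ⟨hP𝒯, hPd⟩ := hP
        obtain ⟨h1, h2, _⟩ := hmem P hP𝒯
        rw [Finset.mem_biUnion]
        exact ⟨P.card, Finset.mem_Icc.mpr ⟨h1, by omega⟩,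
          Finset.mem_powersetCard.mpr ⟨Finset.subset_univ _, rfl⟩⟩
      calc (𝒯.filter fun P => ¬ P.card = d).card
          ≤ ((Finset.Icc 1 (d - 1)).biUnion fun i => Finset.univ.powersetCard i).card :=
            Finset.card_le_card hsub
        _ ≤ ∑ i ∈ Finset.Icc 1 (d - 1), ((Finset.univ (α := A)).powersetCard i).card :=
            Finset.card_biUnion_le
        _ ≤ ∑ _i ∈ Finset.Icc 1 (d - 1), Fintype.card A ^ (d - 1) := by
            apply Finset.sum_le_sum
            intro i hi
            rw [Finset.card_powersetCard, Finset.card_univ]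
            calc (Fintype.card A).choose i ≤ Fintype.card A ^ i := Nat.choose_le_pow _ _
              _ ≤ Fintype.card A ^ (d - 1) :=
                  Nat.pow_le_pow_right hl1 (Finset.mem_Icc.mp hi).2
        _ = (d - 1) * Fintype.card A ^ (d - 1) := by
            rw [Finset.sum_const, Nat.card_Icc, smul_eq_mul]
            have : d - 1 + 1 - 1 = d - 1 := by omega
            rw [this]
    have h₂' : ((𝒯.filter fun P => ¬ P.card = d).card : ℝ)
        ≤ ((d : ℝ) - 1) * (Fintype.card A : ℝ) ^ ((d : ℝ) - 1) := by
      have e1 : ((Fintype.card A ^ (d - 1) : ℕ) : ℝ)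
          = (Fintype.card A : ℝ) ^ ((d : ℝ) - 1) := by
        rw [Nat.cast_pow, ← Real.rpow_natCast (Fintype.card A : ℝ) (d - 1)]
        congr 1
        rw [Nat.cast_sub (by omega : 1 ≤ d), Nat.cast_one]
      calc ((𝒯.filter fun P => ¬ P.card = d).card : ℝ)
          ≤ (((d - 1) * Fintype.card A ^ (d - 1) : ℕ) : ℝ) := Nat.cast_le.mpr h₂
        _ = ((d : ℝ) - 1) * (Fintype.card A : ℝ) ^ ((d : ℝ) - 1) := by
            rw [Nat.cast_mul, e1, Nat.cast_sub (by omega : 1 ≤ d), Nat.cast_one]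
    have hcard : (𝒯.card : ℝ) = ((𝒯.filter fun P => P.card = d).card : ℝ)
        + ((𝒯.filter fun P => ¬ P.card = d).card : ℝ) := by
      rw [← hsplit]; push_cast; ring
    have hd0 : ((d + 0 : ℕ) : ℝ) = (d : ℝ) := by push_cast; ring
    rw [hcard, hd0]
    have hlast : ((d : ℝ) - 1) * (Fintype.card A : ℝ) ^ ((d : ℝ) - 1)
        ≤ (d : ℝ) * (Fintype.card A : ℝ) ^ ((d : ℝ) - 1) := by
      apply mul_le_mul_of_nonneg_right _ (Real.rpow_nonneg hl0.le _)
      linarith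
    linarith
  | succ j ihj =>
    intro 𝒯 hmem hinc
    have hfiber : ∀ a : A, ((𝒯.filter fun P => a ∈ P).card : ℝ)
        ≤ (3 / 2 * (Fintype.card A : ℝ) ^ (((d + j : ℕ) : ℝ) - ε)
          + ((d + j : ℕ) : ℝ) * (Fintype.card A : ℝ) ^ (((d + j : ℕ) : ℝ) - 1)) + 1 := by
      intro a
      have hT' : (((((𝒯.filter fun P => a ∈ P).image fun P => P.erase a).erase ∅).card : ℕ) : ℝ)
          ≤ 3 / 2 * (Fintype.card A : ℝ) ^ (((d + j : ℕ) : ℝ) - ε)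
            + ((d + j : ℕ) : ℝ) * (Fintype.card A : ℝ) ^ (((d + j : ℕ) : ℝ) - 1) := by
        apply ihj
        · intro P' hP'
          rw [Finset.mem_erase, Finset.mem_image] at hP'
          obtain ⟨hne, P, hPF, rfl⟩ := hP'
          rw [Finset.mem_filter] at hPF
          obtain ⟨hP𝒯, haP⟩ := hPF
          obtain ⟨h1, h2, h3⟩ := hmem P hP𝒯
          refine ⟨?_, ?_, ?_⟩
          · exact Nat.one_le_iff_ne_zero.mpr fun h => hne (Finset.card_eq_zero.mp h)
          · rw [Finset.card_erase_of_mem haP]; omega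
          · obtain ⟨x, hx⟩ := h3
            rw [Set.mem_iInter₂] at hx
            exact ⟨x, Set.mem_iInter₂.mpr fun b hb => hx b (Finset.mem_of_mem_erase hb)⟩
        · intro P' hP' Q' hQ' hPQ'
          rw [Finset.mem_erase, Finset.mem_image] at hP' hQ'
          obtain ⟨hne, P, hPF, rfl⟩ := hP'
          obtain ⟨hne', Q, hQF, rfl⟩ := hQ'
          rw [Finset.mem_filter] at hPF hQF
          have hPQ : P ≠ Q := fun h => hPQ' (by rw [h])
          obtain ⟨x, hxP, y, hyQ, hxy⟩ := hinc P hPF.1 Q hQF.1 hPQ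
          have hcons' : ∀ R, R ∈ 𝒯 → ∀ u v : A, u ∈ R → v ∈ R → ¬ S u ∩ S v = ∅ := by
            intro R hR u v hu hv h0
            obtain ⟨z, hz⟩ := (hmem R hR).2.2
            rw [Set.mem_iInter₂] at hz
            have : z ∈ S u ∩ S v := ⟨hz u hu, hz v hv⟩
            rw [h0] at this
            exact this
          have hxa : x ≠ a := by
            rintro rfl
            exact hcons' Q hQF.1 x y hQF.2 hyQ hxy
          have hya : y ≠ a := by
            rintro rfl
            exact hcons' P hPF.1 x y hxP hPF.2 hxy
          exact ⟨x, Finset.mem_erase.mpr ⟨hxa, hxP⟩, y, Finset.mem_erase.mpr ⟨hya, hyQ⟩, hxy⟩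
      have himg : ((𝒯.filter fun P => a ∈ P).image fun P => P.erase a).card
          = (𝒯.filter fun P => a ∈ P).card := by
        apply Finset.card_image_of_injOn
        intro P hP Q hQ hePQ
        rw [Finset.mem_coe, Finset.mem_filter] at hP hQ
        dsimp only at hePQ
        rw [← Finset.insert_erase hP.2, ← Finset.insert_erase hQ.2, hePQ]
      have hle : ((𝒯.filter fun P => a ∈ P).image fun P => P.erase a)
          ⊆ insert ∅ ((((𝒯.filter fun P => a ∈ P).image fun P => P.erase a)).erase ∅) := by
        intro P' hP'
        by_cases h : P' = ∅
        · rw [h]; exact Finset.mem_insert_self _ _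
        · exact Finset.mem_insert_of_mem (Finset.mem_erase.mpr ⟨h, hP'⟩)
      have hcount : (𝒯.filter fun P => a ∈ P).card
          ≤ ((((𝒯.filter fun P => a ∈ P).image fun P => P.erase a)).erase ∅).card + 1 := by
        rw [← himg]
        calc ((𝒯.filter fun P => a ∈ P).image fun P => P.erase a).card
            ≤ (insert ∅ ((((𝒯.filter fun P => a ∈ P).image fun P => P.erase a)).erase ∅)).card :=
              Finset.card_le_card hle
          _ ≤ _ := Finset.card_insert_le _ _
      calc ((𝒯.filter fun P => a ∈ P).card : ℝ)
          ≤ (((((𝒯.filter fun P => a ∈ P).image fun P => P.erase a)).erase ∅).card : ℝ) + 1 := by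
            exact_mod_cast Nat.cast_le.mpr hcount
        _ ≤ _ := by linarith
    have hsum : 𝒯.card ≤ ∑ a : A, (𝒯.filter fun P => a ∈ P).card := by
      have h1 : ∑ a : A, (𝒯.filter fun P => a ∈ P).card = ∑ P ∈ 𝒯, P.card := by
        simp_rw [Finset.card_filter]
        rw [Finset.sum_comm]
        refine Finset.sum_congr rfl fun P _ => ?_
        rw [← Finset.card_filter]
        rw [Finset.filter_univ_mem]
      rw [h1]
      calc 𝒯.card = ∑ _P ∈ 𝒯, 1 := by rw [Finset.sum_const, smul_eq_mul, mul_one]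
        _ ≤ ∑ P ∈ 𝒯, P.card := Finset.sum_le_sum fun P hP => (hmem P hP).1
    have hBnn : (0 : ℝ) ≤ 3 / 2 * (Fintype.card A : ℝ) ^ (((d + j : ℕ) : ℝ) - ε)
        + ((d + j : ℕ) : ℝ) * (Fintype.card A : ℝ) ^ (((d + j : ℕ) : ℝ) - 1) := by
      have := Real.rpow_nonneg hl0.le (((d + j : ℕ) : ℝ) - ε)
      have := Real.rpow_nonneg hl0.le (((d + j : ℕ) : ℝ) - 1)
      have : (0 : ℝ) ≤ ((d + j : ℕ) : ℝ) := Nat.cast_nonneg _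
      positivity
    have hmain : (𝒯.card : ℝ) ≤ (Fintype.card A : ℝ)
        * ((3 / 2 * (Fintype.card A : ℝ) ^ (((d + j : ℕ) : ℝ) - ε)
          + ((d + j : ℕ) : ℝ) * (Fintype.card A : ℝ) ^ (((d + j : ℕ) : ℝ) - 1)) + 1) := by
      calc (𝒯.card : ℝ) ≤ ((∑ a : A, (𝒯.filter fun P => a ∈ P).card : ℕ) : ℝ) :=
            Nat.cast_le.mpr hsum
        _ = ∑ a : A, ((𝒯.filter fun P => a ∈ P).card : ℝ) := by push_cast; rfl
        _ ≤ ∑ _a : A, ((3 / 2 * (Fintype.card A : ℝ) ^ (((d + j : ℕ) : ℝ) - ε)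
            + ((d + j : ℕ) : ℝ) * (Fintype.card A : ℝ) ^ (((d + j : ℕ) : ℝ) - 1)) + 1) :=
            Finset.sum_le_sum fun a _ => hfiber a
        _ = _ := by rw [Finset.sum_const, Finset.card_univ, nsmul_eq_mul]
    -- now rearrange the right-hand side
    have hstep : (Fintype.card A : ℝ)
        * ((3 / 2 * (Fintype.card A : ℝ) ^ (((d + j : ℕ) : ℝ) - ε)
          + ((d + j : ℕ) : ℝ) * (Fintype.card A : ℝ) ^ (((d + j : ℕ) : ℝ) - 1)) + 1)
        ≤ 3 / 2 * (Fintype.card A : ℝ) ^ (((d + (j + 1) : ℕ) : ℝ) - ε)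
          + ((d + (j + 1) : ℕ) : ℝ) * (Fintype.card A : ℝ) ^ (((d + (j + 1) : ℕ) : ℝ) - 1) := by
      set L : ℝ := (Fintype.card A : ℝ) with hL
      have hcast : ((d + (j + 1) : ℕ) : ℝ) = ((d + j : ℕ) : ℝ) + 1 := by push_cast; ring
      have e1 : L * L ^ (((d + j : ℕ) : ℝ) - ε) = L ^ (((d + (j + 1) : ℕ) : ℝ) - ε) := by
        rw [hcast]
        rw [show ((d + j : ℕ) : ℝ) + 1 - ε = 1 + (((d + j : ℕ) : ℝ) - ε) by ring]
        rw [Real.rpow_add hl0, Real.rpow_one]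
      have e2 : L * L ^ (((d + j : ℕ) : ℝ) - 1) = L ^ (((d + (j + 1) : ℕ) : ℝ) - 1) := by
        rw [hcast]
        rw [show ((d + j : ℕ) : ℝ) + 1 - 1 = 1 + (((d + j : ℕ) : ℝ) - 1) by ring]
        rw [Real.rpow_add hl0, Real.rpow_one]
      have e3 : L ≤ L ^ (((d + (j + 1) : ℕ) : ℝ) - 1) := by
        nth_rewrite 1 [← Real.rpow_one L]
        apply Real.rpow_le_rpow_of_exponent_le hl1'
        rw [hcast]
        have : (2 : ℝ) ≤ ((d + j : ℕ) : ℝ) := by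
          have : (2 : ℕ) ≤ d + j := by omega
          exact_mod_cast this
        linarith
      calc L * ((3 / 2 * L ^ (((d + j : ℕ) : ℝ) - ε)
            + ((d + j : ℕ) : ℝ) * L ^ (((d + j : ℕ) : ℝ) - 1)) + 1)
          = 3 / 2 * (L * L ^ (((d + j : ℕ) : ℝ) - ε))
            + ((d + j : ℕ) : ℝ) * (L * L ^ (((d + j : ℕ) : ℝ) - 1)) + L := by ring
        _ = 3 / 2 * L ^ (((d + (j + 1) : ℕ) : ℝ) - ε)
            + ((d + j : ℕ) : ℝ) * L ^ (((d + (j + 1) : ℕ) : ℝ) - 1) + L := by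
            rw [e1, e2]
        _ ≤ 3 / 2 * L ^ (((d + (j + 1) : ℕ) : ℝ) - ε)
            + ((d + j : ℕ) : ℝ) * L ^ (((d + (j + 1) : ℕ) : ℝ) - 1)
            + L ^ (((d + (j + 1) : ℕ) : ℝ) - 1) := by linarith
        _ = _ := by rw [hcast]; ring
    linarith

end Count


/-- (Combinatorial core of "power saving characterizes 2-TP₂".) Let `d ≥ 2` and `k ≥ d`.
There is `L ∈ ℕ` (depending only on `k, d`) such that for every `l ≥ L`: if `A` has `l`
elements, `(S_a)_{a∈A}` is a family of subsets of `X`, and `𝒮` is a collection of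
consistent subsets of `A` of size between `1` and `k` which are pairwise `1`-inconsistent
with `|𝒮| > 2·l^{k − 1/d^{d−1}}`, then there is a `d × d` grid `(a_{i,j})` in `A` whose
rows give pairwise disjoint sets while every transversal has non-empty intersection. -/
theorem power_saving_grid (d k : ℕ) (hd : 2 ≤ d) (hk : d ≤ k) :
    ∃ L : ℕ, ∀ l : ℕ, L ≤ l →
      ∀ (X : Type*) (A : Type*) [Fintype A], Fintype.card A = l →
        ∀ (S : A → Set X) (𝒮 : Finset (Finset A)),
          (∀ P ∈ 𝒮, 1 ≤ P.card ∧ P.card ≤ k ∧ (⋂ a ∈ P, S a).Nonempty) →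
          (∀ P ∈ 𝒮, ∀ Q ∈ 𝒮, P ≠ Q → ∃ a ∈ P, ∃ b ∈ Q, S a ∩ S b = ∅) →
          2 * (l : ℝ) ^ ((k : ℝ) - 1 / (d : ℝ) ^ (d - 1)) < (𝒮.card : ℝ) →
          ∃ a : Fin d → Fin d → A,
            (∀ i : Fin d, ∀ j j' : Fin d, j ≠ j' → S (a i j) ∩ S (a i j') = ∅) ∧
            ∀ f : Fin d → Fin d, (⋂ i, S (a i (f i))).Nonempty := by
  classical
  obtain ⟨n₀, hn₀⟩ := erdos_box d hd (d - 1)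
  refine ⟨max (max n₀ (4 * k * k)) 1, ?_⟩
  intro l hLl X A _ hcardA S 𝒮 hmem hinc hbig
  by_contra hgrid
  subst hcardA
  have hd1 : d - 1 + 1 = d := by omega
  have hl1 : 1 ≤ Fintype.card A := le_trans (le_max_right _ _) hLl
  have hln₀ : n₀ ≤ Fintype.card A :=
    le_trans (le_trans (le_max_left _ _) (le_max_left _ _)) hLl
  have hlk : 4 * k * k ≤ Fintype.card A :=
    le_trans (le_trans (le_max_right _ _) (le_max_left _ _)) hLl
  set ε : ℝ := 1 / (d : ℝ) ^ (d - 1) with hε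
  have hl0 : (0 : ℝ) < (Fintype.card A : ℝ) := by exact_mod_cast hl1
  have hl1' : (1 : ℝ) ≤ (Fintype.card A : ℝ) := by exact_mod_cast hl1
  have hd0 : (0 : ℝ) < (d : ℝ) := by exact_mod_cast (by omega : 0 < d)
  have hd2 : (2 : ℝ) ≤ (d : ℝ) := by exact_mod_cast hd
  have hdpow2 : (2 : ℝ) ≤ (d : ℝ) ^ (d - 1) :=
    le_trans hd2 (le_self_pow₀ (by linarith) (by omega : d - 1 ≠ 0))
  have hε0 : 0 < ε := by rw [hε]; positivity
  have hεhalf : ε ≤ 1 / 2 := by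
    rw [hε]
    rw [div_le_div_iff₀ (by linarith) (by norm_num)]
    linarith
  have hE : ∀ E : Finset (Finset A),
      (∀ e ∈ E, e.card = d) → (∀ e ∈ E, (⋂ a ∈ e, S a).Nonempty) →
      (∀ P ∈ E, ∀ Q ∈ E, P ≠ Q → ∃ a ∈ P, ∃ b ∈ Q, S a ∩ S b = ∅) →
      (E.card : ℝ) ≤ 3 / 2 * (Fintype.card A : ℝ) ^ ((d : ℝ) - ε) := by
    intro E hunif hcons hpair
    have hnobox : ¬ HasBox E (d - 1 + 1) d := by
      rw [hd1]
      intro hbox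
      exact hgrid (grid_of_box S d hd E hcons hpair hbox)
    have hb := hn₀ A E hln₀ (by rw [hd1]; exact hunif) hnobox
    rw [if_neg (by omega : ¬ d - 1 = 0)] at hb
    have hexp : ((d - 1 : ℕ) : ℝ) + 1 - 1 / (d : ℝ) ^ (d - 1) = (d : ℝ) - ε := by
      rw [hε, Nat.cast_sub (by omega : 1 ≤ d), Nat.cast_one]
      ring
    rwa [hexp] at hb
  have hkd : d + (k - d) = k := by omega
  have hbound := size_bound S d hd hl1 ε hε0.le (by linarith : ε ≤ 1) hE (k - d) 𝒮
    (by rw [hkd]; exact hmem) hinc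
  rw [hkd] at hbound
  have hsplit : (Fintype.card A : ℝ) ^ ((k : ℝ) - ε)
      = (Fintype.card A : ℝ) ^ ((k : ℝ) - 1) * (Fintype.card A : ℝ) ^ ((1 : ℝ) - ε) := by
    rw [← Real.rpow_add hl0]
    congr 1
    ring
  have h2k : (2 : ℝ) * (k : ℝ) ≤ (Fintype.card A : ℝ) ^ ((1 : ℝ) - ε) := by
    have hk0 : (0 : ℝ) ≤ 2 * (k : ℝ) := by positivity
    have e2 : ((2 * (k : ℝ)) * (2 * (k : ℝ))) ^ ((1 : ℝ) / 2)
        ≤ (Fintype.card A : ℝ) ^ ((1 : ℝ) / 2) := by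
      apply Real.rpow_le_rpow (by positivity) _ (by norm_num)
      have : ((4 * k * k : ℕ) : ℝ) ≤ (Fintype.card A : ℝ) := Nat.cast_le.mpr hlk
      push_cast at this
      linarith
    have e3 : ((2 * (k : ℝ)) * (2 * (k : ℝ))) ^ ((1 : ℝ) / 2) = 2 * (k : ℝ) := by
      rw [show (2 * (k : ℝ)) * (2 * (k : ℝ)) = (2 * (k : ℝ)) ^ (2 : ℕ) by ring,
        ← Real.rpow_natCast (2 * (k : ℝ)) 2, ← Real.rpow_mul hk0]
      norm_num
    have e4 : (Fintype.card A : ℝ) ^ ((1 : ℝ) / 2)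
        ≤ (Fintype.card A : ℝ) ^ ((1 : ℝ) - ε) := by
      apply Real.rpow_le_rpow_of_exponent_le hl1'
      linarith
    rw [e3] at e2
    linarith
  have hfin : (k : ℝ) * (Fintype.card A : ℝ) ^ ((k : ℝ) - 1)
      ≤ 1 / 2 * (Fintype.card A : ℝ) ^ ((k : ℝ) - ε) := by
    rw [hsplit]
    nlinarith [mul_le_mul_of_nonneg_right h2k
      (Real.rpow_nonneg hl0.le ((k : ℝ) - 1)),
      Real.rpow_nonneg hl0.le ((k : ℝ) - 1)]
  linarith
end

section
/- Let κ ≤ λ be infinite cardinals such that λ^κ > λ + 2^κ. Then there exist cardinals θ and μ such that: θ is a regular cardinal with θ ≤ κ; μ ≤ λ; μ^θ = λ^κ; and μ^ν ≤ λ for every cardinal ν < θ. (Consequently the tree μ^{<θ} has at most λ nodes, θ levels, and λ^κ branches, so in particular if λ^κ > 2^κ then the tree-exponent λ^{κ,tr} equals λ^κ.) -/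
open Cardinal

universe u

private lemma prod_power_aux {ι : Type u} (f : ι → Cardinal.{u}) (c : Cardinal.{u}) :
    (Cardinal.prod f) ^ c = Cardinal.prod (fun i => f i ^ c) := by
  induction c using Cardinal.inductionOn with
  | _ γ =>
    have h1 : Cardinal.prod f = #(Π i, (f i).out) := by
      rw [Cardinal.mk_pi]; simp [Cardinal.mk_out]
    calc Cardinal.prod f ^ #γ
        = #(Π i, (f i).out) ^ #γ := by rw [h1]
      _ = #(γ → Π i, (f i).out) := power_def _ _
      _ = #(Π i, γ → (f i).out) :=
          mk_congr (Equiv.piComm fun (g : γ) (i : ι) => (f i).out)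
      _ = Cardinal.prod (fun i => #(γ → (f i).out)) := Cardinal.mk_pi _
      _ = Cardinal.prod (fun i => f i ^ #γ) := by
          refine congrArg _ ?_
          funext i
          rw [← power_def, Cardinal.mk_out]

private lemma pow_le_of_lt_cof_aux {μ : Cardinal.{u}} (hμ : ℵ₀ ≤ μ) {ν : Cardinal.{u}}
    (hν : ν < μ.ord.cof) (H : ∀ ρ, ρ < μ → ρ ^ ν ≤ μ) : μ ^ ν ≤ μ := by
  classical
  letI : IsWellOrder μ.ord.ToType (· < ·) := isWellOrder_lt
  have hT : #μ.ord.ToType = μ := by rw [Cardinal.mk_toType, Cardinal.card_ord]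
  have hνm : #ν.out = ν := Cardinal.mk_out ν
  have key : μ ^ ν = #(ν.out → μ.ord.ToType) := by
    conv_lhs => rw [← hT, ← hνm]
    exact power_def _ _
  have hmap : ∀ g : ν.out → μ.ord.ToType, ∃ x : μ.ord.ToType, ∀ i, g i ≤ x := by
    intro g
    have h1 : ∀ i, Ordinal.typein (α := μ.ord.ToType) (· < ·) (g i) < μ.ord := fun i =>
      Ordinal.typein_lt_self (g i)
    have h2 : (⨆ i, Ordinal.typein (α := μ.ord.ToType) (· < ·) (g i)) < μ.ord :=
      Ordinal.iSup_lt_ord (by rw [hνm]; exact hν) h1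
    have h2' : (⨆ i, Ordinal.typein (α := μ.ord.ToType) (· < ·) (g i)) <
        Ordinal.type (α := μ.ord.ToType) (· < ·) := by rwa [Ordinal.type_toType]
    refine ⟨Ordinal.enum (α := μ.ord.ToType) (· < ·) ⟨_, h2'⟩, fun i => ?_⟩
    rw [← Ordinal.typein_le_typein' μ.ord]
    rw [Ordinal.typein_enum]
    exact Ordinal.le_iSup (fun i => Ordinal.typein (α := μ.ord.ToType) (· < ·) (g i)) i
  let Φ : (ν.out → μ.ord.ToType) → Σ x : μ.ord.ToType, (ν.out → Set.Iic x) := fun g =>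
    ⟨Classical.choose (hmap g), fun i => ⟨g i, Classical.choose_spec (hmap g) i⟩⟩
  have hΦinj : Function.Injective Φ := by
    have : Function.LeftInverse
        (fun p : Σ x : μ.ord.ToType, (ν.out → Set.Iic x) => fun i => (p.2 i).1) Φ :=
      fun g => rfl
    exact this.injective
  have hbound : ∀ x : μ.ord.ToType, #(Set.Iic x) < μ := by
    intro x
    have h1 : #(Set.Iic x) ≤ #(Set.Iio x) + 1 := by
      rw [← Set.Iio_union_right]
      exact (Cardinal.mk_union_le _ _).trans (by rw [Cardinal.mk_singleton])
    have h2 : #(Set.Iio x) = (Ordinal.typein (α := μ.ord.ToType) (· < ·) x).card :=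
      Ordinal.card_typein (r := ((· < ·) : μ.ord.ToType → μ.ord.ToType → Prop)) x
    have h3 : (Ordinal.typein (α := μ.ord.ToType) (· < ·) x).card < μ :=
      Cardinal.lt_ord.1 (Ordinal.typein_lt_self x)
    calc #(Set.Iic x) ≤ #(Set.Iio x) + 1 := h1
      _ = (Ordinal.typein (α := μ.ord.ToType) (· < ·) x).card + 1 := by rw [h2]
      _ < μ := Cardinal.add_lt_of_lt hμ h3 (one_lt_aleph0.trans_le hμ)
  calc μ ^ ν = #(ν.out → μ.ord.ToType) := key
    _ ≤ #(Σ x : μ.ord.ToType, (ν.out → Set.Iic x)) := Cardinal.mk_le_of_injective hΦinj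
    _ = Cardinal.sum (fun x : μ.ord.ToType => #(ν.out → Set.Iic x)) := Cardinal.mk_sigma _
    _ ≤ Cardinal.sum (fun _ : μ.ord.ToType => μ) := by
        refine Cardinal.sum_le_sum _ _ fun x => ?_
        have hx : #(ν.out → Set.Iic x) = #(Set.Iic x) ^ ν := by
          conv_rhs => rw [← hνm]
          exact (power_def _ _).symm
        rw [hx]
        exact H _ (hbound x)
    _ = #μ.ord.ToType * μ := Cardinal.sum_const' _ μ
    _ = μ := by rw [hT, Cardinal.mul_eq_self hμ]

/-- (Tree exponent lemma.) Let `κ ≤ λ` be infinite cardinals with `λ^κ > λ + 2^κ`. Then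
there exist cardinals `θ` and `μ` such that `θ` is regular with `θ ≤ κ`, `μ ≤ λ`,
`μ^θ = λ^κ`, and `μ^ν ≤ λ` for every cardinal `ν < θ`. -/
theorem tree_exponent_lemma (κ lam : Cardinal) (hκ : ℵ₀ ≤ κ) (hκlam : κ ≤ lam)
    (h : lam + 2 ^ κ < lam ^ κ) :
    ∃ θ μ : Cardinal, θ.IsRegular ∧ θ ≤ κ ∧ μ ≤ lam ∧ μ ^ θ = lam ^ κ ∧
      ∀ ν : Cardinal, ν < θ → μ ^ ν ≤ lam := by
  have hlaminf : ℵ₀ ≤ lam := hκ.trans hκlam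
  have hlamne : lam ≠ 0 := (aleph0_pos.trans_le hlaminf).ne'
  -- 2 ^ κ < lam
  have h2 : 2 ^ κ < lam := by
    by_contra hcon
    push_neg at hcon
    have hle : lam ^ κ ≤ 2 ^ κ := by
      calc lam ^ κ ≤ (2 ^ κ) ^ κ := power_le_power_right hcon
        _ = 2 ^ (κ * κ) := by rw [← power_mul]
        _ = 2 ^ κ := by rw [mul_eq_self hκ]
    exact absurd (hle.trans (self_le_add_left _ lam)) h.not_ge
  have hlt : lam < lam ^ κ := (self_le_add_right lam _).trans_lt h
  set S : Set Cardinal := {c | lam ≤ c ^ κ} with hSdef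
  have hlamS : lam ∈ S := by
    show lam ≤ lam ^ κ
    exact hlt.le
  set μ : Cardinal := sInf S with hμdef
  have hμS : lam ≤ μ ^ κ := csInf_mem ⟨lam, hlamS⟩
  have hμlam : μ ≤ lam := csInf_le' hlamS
  have hmin : ∀ ρ, ρ < μ → ρ ^ κ < lam := by
    intro ρ hρ
    by_contra hcon
    push_neg at hcon
    exact absurd (csInf_le' (show ρ ∈ S from hcon)) hρ.not_ge
  have h2κμ : 2 ^ κ < μ := by
    by_contra hcon
    push_neg at hcon
    have hle : μ ^ κ ≤ 2 ^ κ := by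
      calc μ ^ κ ≤ (2 ^ κ) ^ κ := power_le_power_right hcon
        _ = 2 ^ (κ * κ) := by rw [← power_mul]
        _ = 2 ^ κ := by rw [mul_eq_self hκ]
    exact absurd (hμS.trans hle) h2.not_ge
  have hκμ : κ < μ := (Cardinal.cantor κ).trans h2κμ
  have hμinf : ℵ₀ ≤ μ := hκ.trans hκμ.le
  have hμne : μ ≠ 0 := (aleph0_pos.trans_le hμinf).ne'
  have hμκ : μ ^ κ = lam ^ κ := by
    apply le_antisymm (power_le_power_right hμlam)
    calc lam ^ κ ≤ (μ ^ κ) ^ κ := power_le_power_right hμS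
      _ = μ ^ (κ * κ) := by rw [← power_mul]
      _ = μ ^ κ := by rw [mul_eq_self hκ]
  have hkey : ∀ ρ, ρ < μ → ρ ^ κ ≤ μ := by
    intro ρ hρ
    by_contra hcon
    push_neg at hcon
    have h1 : μ ^ κ ≤ ρ ^ κ := by
      calc μ ^ κ ≤ (ρ ^ κ) ^ κ := power_le_power_right hcon.le
        _ = ρ ^ (κ * κ) := by rw [← power_mul]
        _ = ρ ^ κ := by rw [mul_eq_self hκ]
    exact absurd (hμS.trans h1) (hmin ρ hρ).not_ge
  set θ : Cardinal := μ.ord.cof with hθdef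
  have hθreg : θ.IsRegular := Cardinal.isRegular_cof (Cardinal.isSuccLimit_ord hμinf)
  have hθκ : θ ≤ κ := by
    by_contra hcon
    push_neg at hcon
    have h1 : μ ^ κ ≤ μ := pow_le_of_lt_cof_aux hμinf hcon hkey
    have h2' : lam ^ κ ≤ lam := by rw [← hμκ]; exact h1.trans hμlam
    exact absurd h2' hlt.not_ge
  have hlast : ∀ ν : Cardinal, ν < θ → μ ^ ν ≤ lam := by
    intro ν hν
    have H : ∀ ρ, ρ < μ → ρ ^ ν ≤ μ := by
      intro ρ hρ
      have hm2 : (2 : Cardinal) < μ := (nat_lt_aleph0 2).trans_le hμinf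
      calc ρ ^ ν ≤ (max ρ 2) ^ ν := power_le_power_right (le_max_left ρ 2)
        _ ≤ (max ρ 2) ^ κ := by
            apply power_le_power_left
            · have h02 : (0 : Cardinal) < 2 := by norm_num
              exact (lt_max_of_lt_right h02).ne'
            · exact hν.le.trans hθκ
        _ ≤ μ := hkey _ (max_lt hρ hm2)
    exact (pow_le_of_lt_cof_aux hμinf hν H).trans hμlam
  -- the main equality
  obtain ⟨ι, f, hlsub, hι⟩ := Ordinal.exists_lsub_cof μ.ord
  have hfi : ∀ i, f i < μ.ord := fun i => hlsub ▸ Ordinal.lt_lsub f i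
  set a : ι → Cardinal := fun i => (f i).card with hadef
  have ha : ∀ i, a i < μ := fun i => Cardinal.lt_ord.1 (hfi i)
  have ha1 : ∀ i, a i + 1 + ℵ₀ < μ := fun i =>
    Cardinal.add_lt_of_lt hμinf
      (Cardinal.add_lt_of_lt hμinf (ha i) (one_lt_aleph0.trans_le hμinf))
      (hκ.trans_lt hκμ)
  set b : ι → Cardinal := fun i => Order.succ (a i + 1 + ℵ₀) with hbdef
  have hb : ∀ i, b i < μ := by
    intro i
    rcases lt_or_eq_of_le (Order.succ_le_of_lt (ha1 i)) with hlt' | heq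
    · exact hlt'
    · exfalso
      have hreg : μ.IsRegular := heq ▸ Cardinal.isRegular_succ le_add_self
      have hco : μ.ord.cof = μ := hreg.cof_eq
      have hcontra : μ ≤ κ := by rw [hθdef] at hθκ; rw [← hco]; exact hθκ
      exact absurd hcontra hκμ.not_ge
  have hsum : μ ≤ Cardinal.sum (fun i => a i + 1) := by
    have h1 : μ.ord = ⨆ i, Order.succ (f i) := by rw [← hlsub]; rfl
    calc μ = μ.ord.card := (Cardinal.card_ord μ).symm
      _ = (⨆ i, Order.succ (f i)).card := by rw [h1]
      _ ≤ Cardinal.sum (fun i => (Order.succ (f i)).card) := Ordinal.card_iSup_le_sum_card _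
      _ = Cardinal.sum (fun i => a i + 1) := by
          refine congrArg _ ?_
          funext i
          rw [Ordinal.card_succ]
  have hprod : μ ≤ Cardinal.prod b := by
    refine hsum.trans (Cardinal.sum_lt_prod (fun i => a i + 1) b fun i => ?_).le
    calc a i + 1 ≤ a i + 1 + ℵ₀ := self_le_add_right _ _
      _ < b i := Order.lt_succ _
  have hmain : μ ^ θ = lam ^ κ := by
    apply le_antisymm
    · rw [← hμκ]
      exact power_le_power_left hμne hθκ
    · calc lam ^ κ = μ ^ κ := hμκ.symm
        _ ≤ (Cardinal.prod b) ^ κ := power_le_power_right hprod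
        _ = Cardinal.prod (fun i => b i ^ κ) := prod_power_aux b κ
        _ ≤ Cardinal.prod (fun _ : ι => μ) :=
            Cardinal.prod_le_prod _ _ (fun i => hkey _ (hb i))
        _ = μ ^ #ι := Cardinal.prod_const' ι μ
        _ = μ ^ θ := by rw [hι]
  exact ⟨θ, μ, hθreg, hθκ, hμlam, hmain, hlast⟩
end
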